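/- arXiv:2501.00503 — 8 statements merged into one kernel-verified Lean document; each statement's English description precedes it below -/
import Mathlib

section
/- For every submeasure φ on a set X and every subset A ⊆ X, there exists a measure μ on X with μ ≤ φ (pointwise on all subsets) and μ(A) = φ̂(A). In particular, if φ is nonpathological, then for every A ⊆ X there is a measure μ ≤ φ with μ(A) = φ(A). -/
open Filter Topology
open scoped ENNReal

/-- A submeasure on a set (type) `X`. -/
def IsSubmeasure {X : Type*} (φ : Set X → ℝ≥0∞) : Prop :=
  φ ∅ = 0 ∧ (∀ A B : Set X, A ⊆ B → φ A ≤ φ B) ∧ ∀ A B : Set X, φ (A ∪ B) ≤ φ A + φ B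

/-- A (finitely additive) measure on `X`. -/
def IsFAMeasure {X : Type*} (μ : Set X → ℝ≥0∞) : Prop :=
  μ ∅ = 0 ∧ ∀ A B : Set X, Disjoint A B → μ (A ∪ B) = μ A + μ B

/-- `hat φ A = sup { μ A : μ a measure with μ ≤ φ pointwise }`. -/
noncomputable def hat {X : Type*} (φ : Set X → ℝ≥0∞) (A : Set X) : ℝ≥0∞ :=
  ⨆ (μ : Set X → ℝ≥0∞) (_ : IsFAMeasure μ ∧ ∀ B, μ B ≤ φ B), μ A

theorem key_attained {X : Type*} (φ : Set X → ℝ≥0∞) (A : Set X) :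
    ∃ μ : Set X → ℝ≥0∞, IsFAMeasure μ ∧ (∀ B, μ B ≤ φ B) ∧ μ A = hat φ A := by
  -- The set of attained values
  set S : Set ℝ≥0∞ := {x | ∃ μ : Set X → ℝ≥0∞,
    (IsFAMeasure μ ∧ ∀ B, μ B ≤ φ B) ∧ μ A = x} with hS
  have hzero : (0 : ℝ≥0∞) ∈ S := by
    refine ⟨fun _ => 0, ⟨⟨rfl, fun _ _ _ => by simp⟩, fun B => zero_le⟩, rfl⟩
  have hsup : hat φ A = sSup S := by
    rw [hat]
    apply le_antisymm
    · exact iSup_le fun μ => iSup_le fun hμ => le_sSup ⟨μ, hμ, rfl⟩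
    · refine sSup_le ?_
      rintro x ⟨μ, hμ, rfl⟩
      exact le_iSup₂_of_le μ hμ le_rfl
  -- the sup is in the closure of S
  have hmem : hat φ A ∈ closure S := by
    rw [hsup]
    exact (isLUB_sSup S).mem_closure ⟨0, hzero⟩
  obtain ⟨x, hxS, hxlim⟩ := mem_closure_iff_seq_limit.1 hmem
  choose ν hν hνA using hxS
  -- ultrafilter extending atTop
  set G : Ultrafilter ℕ := Ultrafilter.of atTop with hG
  have hGle : (↑G : Filter ℕ) ≤ atTop := Ultrafilter.of_le _
  -- the pointwise limit
  set μ : Set X → ℝ≥0∞ := fun B => (G.map (fun n => ν n B)).lim with hμdef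
  have hT : ∀ B, Tendsto (fun n => ν n B) ↑G (𝓝 (μ B)) := by
    intro B
    have := (G.map (fun n => ν n B)).le_nhds_lim
    rwa [Ultrafilter.coe_map] at this
  refine ⟨μ, ⟨?_, ?_⟩, ?_, ?_⟩
  · -- μ ∅ = 0
    have h0 : Tendsto (fun n => ν n (∅ : Set X)) ↑G (𝓝 0) := by
      have : (fun n => ν n (∅ : Set X)) = fun _ => (0:ℝ≥0∞) := by
        funext n; exact (hν n).1.1
      rw [this]; exact tendsto_const_nhds
    exact tendsto_nhds_unique (hT ∅) h0
  · -- additivity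
    intro C D hCD
    have h1 : Tendsto (fun n => ν n (C ∪ D)) ↑G (𝓝 (μ C + μ D)) := by
      have : (fun n => ν n (C ∪ D)) = fun n => ν n C + ν n D := by
        funext n; exact (hν n).1.2 C D hCD
      rw [this]; exact (hT C).add (hT D)
    exact tendsto_nhds_unique (hT (C ∪ D)) h1
  · -- μ ≤ φ
    intro B
    exact le_of_tendsto (hT B) (Eventually.of_forall fun n => (hν n).2 B)
  · -- μ A = hat φ A
    have h2 : Tendsto (fun n => ν n A) ↑G (𝓝 (hat φ A)) := by
      have : (fun n => ν n A) = x := funext hνA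
      rw [this]; exact hxlim.mono_left hGle
    exact tendsto_nhds_unique (hT A) h2

/-- For every submeasure `φ` on `X` and every `A ⊆ X` there is a measure `μ ≤ φ` with
`μ A = hat φ A`; in particular, if `φ` is nonpathological, then for every `A` there is a
measure `μ ≤ φ` with `μ A = φ A`. -/
theorem stmt0 {X : Type*} (φ : Set X → ℝ≥0∞) (hφ : IsSubmeasure φ) :
    (∀ A : Set X, ∃ μ : Set X → ℝ≥0∞, IsFAMeasure μ ∧ (∀ B, μ B ≤ φ B) ∧ μ A = hat φ A) ∧
    ((∀ A, hat φ A = φ A) →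
      ∀ A : Set X, ∃ μ : Set X → ℝ≥0∞, IsFAMeasure μ ∧ (∀ B, μ B ≤ φ B) ∧ μ A = φ A) := by
  constructor
  · exact fun A => key_attained φ A
  · intro h A
    obtain ⟨μ, h1, h2, h3⟩ := key_attained φ A
    exact ⟨μ, h1, h2, by rw [h3, h A]⟩
end

section
/- For every submeasure φ on ω and every finite set F ⊆ ω, φ̂(F) = φ̂_σ(F). Moreover, if φ(ω ∖ F) = 0 for some finite set F ⊆ ω, then φ̂ = φ̂_σ (on all subsets of ω). -/
open Filter
open scoped ENNReal

/-- A σ-measure on `X`: a measure that is countably additive on pairwise disjoint sequences. -/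
def IsSigmaMeasure {X : Type*} (μ : Set X → ℝ≥0∞) : Prop :=
  IsFAMeasure μ ∧ ∀ A : ℕ → Set X, (Pairwise fun m n => Disjoint (A m) (A n)) →
    μ (⋃ n, A n) = ∑' n, μ (A n)

/-- `hatSigma φ A = sup { μ A : μ a σ-measure with μ ≤ φ pointwise }`. -/
noncomputable def hatSigma {X : Type*} (φ : Set X → ℝ≥0∞) (A : Set X) : ℝ≥0∞ :=
  ⨆ (μ : Set X → ℝ≥0∞) (_ : IsSigmaMeasure μ ∧ ∀ B, μ B ≤ φ B), μ A

/-- Lower semicontinuity of a submeasure. -/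
def IsLSC {X : Type*} (φ : Set X → ℝ≥0∞) : Prop :=
  ∀ A : Set X, φ A = ⨆ (F : Set X) (_ : F ⊆ A ∧ F.Finite), φ F

/-- The ratio used in the degree of pathology, with the conventions
`∞/∞ = 0/0 = 1`, `a/0 = ∞` and `∞/a = ∞` for positive real `a`. -/
noncomputable def pratio (a b : ℝ≥0∞) : ℝ≥0∞ :=
  if (a = 0 ∧ b = 0) ∨ (a = ⊤ ∧ b = ⊤) then 1 else a / b

/-- The degree of pathology. -/
noncomputable def degP {X : Type*} (φ : Set X → ℝ≥0∞) : ℝ≥0∞ :=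
  ⨆ A : Set X, pratio (φ A) (hat φ A)

/-- The σ-degree of pathology. -/
noncomputable def degPSigma {X : Type*} (φ : Set X → ℝ≥0∞) : ℝ≥0∞ :=
  ⨆ A : Set X, pratio (φ A) (hatSigma φ A)

/-- The Fin-degree of pathology. -/
noncomputable def degPFin {X : Type*} (φ : Set X → ℝ≥0∞) : ℝ≥0∞ :=
  ⨆ (A : Set X) (_ : A.Finite), pratio (φ A) (hat φ A)


lemma famFinsetAdd {X : Type*} {μ : Set X → ℝ≥0∞} (hμ : IsFAMeasure μ)
    (A : ℕ → Set X) :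
    ∀ s : Finset ℕ, (∀ m ∈ s, ∀ n ∈ s, m ≠ n → Disjoint (A m) (A n)) →
      μ (⋃ n ∈ s, A n) = ∑ n ∈ s, μ (A n) := by
  intro s
  induction s using Finset.induction_on with
  | empty => intro _; simpa using hμ.1
  | @insert a s' ha ih =>
    intro hd
    rw [Finset.set_biUnion_insert, hμ.2 _ _ ?_, Finset.sum_insert ha,
      ih fun m hm n hn h => hd m (Finset.mem_insert_of_mem hm) n (Finset.mem_insert_of_mem hn) h]
    · refine Set.disjoint_iUnion_right.2 fun n => Set.disjoint_iUnion_right.2 fun hn => ?_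
      exact hd a (Finset.mem_insert_self a s') n (Finset.mem_insert_of_mem hn)
        (fun h => ha (h ▸ hn))

/-- Restricting a finitely additive measure to a finite set gives a σ-measure. -/
lemma restrictSigma {μ : Set ℕ → ℝ≥0∞} (hμ : IsFAMeasure μ)
    {F : Set ℕ} (hF : F.Finite) :
    IsSigmaMeasure (fun B => μ (B ∩ F)) := by
  have hFA : IsFAMeasure (fun B => μ (B ∩ F)) := by
    refine ⟨by simpa using hμ.1, fun A B hAB => ?_⟩
    simp only [Set.union_inter_distrib_right]
    exact hμ.2 _ _ (hAB.mono Set.inter_subset_left Set.inter_subset_left)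
  refine ⟨hFA, fun A hA => ?_⟩
  classical
  -- the set of indices with nonempty intersection is finite
  have hSfin : {n | (A n ∩ F).Nonempty}.Finite := by
    have : {n | (A n ∩ F).Nonempty} ⊆
        (fun x : ℕ => if h : ∃ n, x ∈ A n then h.choose else 0) '' F := by
      rintro n ⟨x, hxA, hxF⟩
      refine ⟨x, hxF, ?_⟩
      have hex : ∃ m, x ∈ A m := ⟨n, hxA⟩
      simp only [dif_pos hex]
      by_contra h
      exact (hA h).le_bot ⟨hex.choose_spec, hxA⟩
    exact (hF.image _).subset this
  set s : Finset ℕ := hSfin.toFinset with hs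
  have hmem : ∀ n, n ∈ s ↔ (A n ∩ F).Nonempty := fun n => hSfin.mem_toFinset
  have hzero : ∀ n ∉ s, μ (A n ∩ F) = 0 := by
    intro n hn
    have : A n ∩ F = ∅ := Set.not_nonempty_iff_eq_empty.1 fun h => hn ((hmem n).2 h)
    rw [this, hμ.1]
  have hUeq : (⋃ n, A n) ∩ F = ⋃ n ∈ s, (A n ∩ F) := by
    ext x
    simp only [Set.mem_inter_iff, Set.mem_iUnion, Set.mem_setOf_eq]
    constructor
    · rintro ⟨⟨n, hn⟩, hxF⟩
      exact ⟨n, (hmem n).2 ⟨x, hn, hxF⟩, hn, hxF⟩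
    · rintro ⟨n, _, hn, hxF⟩
      exact ⟨⟨n, hn⟩, hxF⟩
  have hdisj : ∀ m ∈ s, ∀ n ∈ s, m ≠ n → Disjoint (A m ∩ F) (A n ∩ F) :=
    fun m _ n _ h => (hA h).mono Set.inter_subset_left Set.inter_subset_left
  calc μ ((⋃ n, A n) ∩ F) = ∑ n ∈ s, μ (A n ∩ F) := by
        rw [hUeq]; exact famFinsetAdd hμ _ s hdisj
    _ = ∑' n, μ (A n ∩ F) := (tsum_eq_sum hzero).symm

/-- For every submeasure `φ` on `ω`: `hat φ` and `hatSigma φ` agree on finite sets, and if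
`φ (ω \ F) = 0` for some finite `F`, then `hat φ = hatSigma φ` everywhere. -/
theorem stmt2 (φ : Set ℕ → ℝ≥0∞) (hφ : IsSubmeasure φ) :
    (∀ F : Set ℕ, F.Finite → hat φ F = hatSigma φ F) ∧
    ((∃ F : Set ℕ, F.Finite ∧ φ (Set.univ \ F) = 0) → ∀ A : Set ℕ, hat φ A = hatSigma φ A) := by
  -- key: hatSigma ≤ hat always
  have hle : ∀ A : Set ℕ, hatSigma φ A ≤ hat φ A := by
    intro A
    refine iSup_le fun μ => iSup_le fun hμ => ?_
    exact le_iSup₂ (f := fun μ (_ : IsFAMeasure μ ∧ ∀ B, μ B ≤ φ B) => μ A) μ ⟨hμ.1.1, hμ.2⟩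
  -- restriction argument
  have key : ∀ (F : Set ℕ), F.Finite → ∀ (μ : Set ℕ → ℝ≥0∞),
      IsFAMeasure μ → (∀ B, μ B ≤ φ B) → ∀ A, μ (A ∩ F) ≤ hatSigma φ A := by
    intro F hF μ hμ hμφ A
    have hν : IsSigmaMeasure (fun B => μ (B ∩ F)) := restrictSigma hμ hF
    have hνφ : ∀ B, μ (B ∩ F) ≤ φ B := fun B =>
      (hμφ _).trans (hφ.2.1 _ _ Set.inter_subset_left)
    exact le_iSup₂ (f := fun ν (_ : IsSigmaMeasure ν ∧ ∀ B, ν B ≤ φ B) => ν A)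
      (fun B => μ (B ∩ F)) ⟨hν, hνφ⟩
  constructor
  · intro F hF
    refine le_antisymm ?_ (hle F)
    refine iSup_le fun μ => iSup_le fun hμ => ?_
    have := key F hF μ hμ.1 hμ.2 F
    simpa [Set.inter_self] using this
  · rintro ⟨F, hF, hF0⟩ A
    refine le_antisymm ?_ (hle A)
    refine iSup_le fun μ => iSup_le fun hμ => ?_
    have hsplit : μ A = μ (A ∩ F) := by
      have h1 : μ A = μ (A ∩ F) + μ (A \ F) := by
        have := hμ.1.2 (A ∩ F) (A \ F) (Set.disjoint_sdiff_right.mono_left Set.inter_subset_right)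
        rwa [Set.inter_union_diff] at this
      have h2 : μ (A \ F) = 0 := le_antisymm
        (le_trans (hμ.2 _) (le_trans (hφ.2.1 _ _ (by intro x hx; exact ⟨trivial, hx.2⟩)) hF0.le))
        zero_le'
      rw [h1, h2, add_zero]
    rw [hsplit]
    exact key F hF μ hμ.1 hμ.2 A
end

section
/- Let φ be a lower semicontinuous submeasure on ω. Then φ is nonpathological if and only if φ is σ-nonpathological (i.e., φ = φ̂ if and only if φ = φ̂_σ). -/
open Filter
open scoped ENNReal

private lemma fa_mono {X : Type*} {μ : Set X → ℝ≥0∞} (h : IsFAMeasure μ)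
    {A B : Set X} (hAB : A ⊆ B) : μ A ≤ μ B := by
  have h2 := h.2 A (B \ A) Set.disjoint_sdiff_right
  rw [Set.union_diff_cancel hAB] at h2
  rw [h2]; exact le_self_add

private lemma fa_finset {μ : Set ℕ → ℝ≥0∞} (h : IsFAMeasure μ) (s : Finset ℕ) :
    μ ↑s = ∑ k ∈ s, μ {k} := by
  classical
  induction s using Finset.induction_on with
  | empty => simpa using h.1
  | @insert a s ha ih =>
    rw [Finset.coe_insert, Set.insert_eq, h.2 _ _ (by simpa using ha), ih,
      Finset.sum_insert ha]

private lemma hat_le_phi {X : Type*} {φ : Set X → ℝ≥0∞} (A : Set X) : hat φ A ≤ φ A :=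
  iSup₂_le fun _ h => h.2 A

private lemma hatSigma_le_phi {X : Type*} {φ : Set X → ℝ≥0∞} (A : Set X) :
    hatSigma φ A ≤ φ A :=
  iSup₂_le fun _ h => h.2 A

open scoped Classical in
private lemma tsum_ite_disjoint (c : ℝ≥0∞) (A : ℕ → Set ℕ) (k : ℕ)
    (hd : Pairwise fun m n => Disjoint (A m) (A n)) :
    ∑' n, (if k ∈ A n then c else 0) = if k ∈ ⋃ n, A n then c else 0 := by
  by_cases hk : k ∈ ⋃ n, A n
  · obtain ⟨n0, hn0⟩ := Set.mem_iUnion.mp hk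
    rw [if_pos hk, tsum_eq_single n0]
    · rw [if_pos hn0]
    · intro m hm
      exact if_neg fun hkm => Set.disjoint_left.mp (hd hm) hkm hn0
  · rw [if_neg hk]
    refine ENNReal.tsum_eq_zero.mpr fun n => if_neg fun hkn => ?_
    exact hk (Set.mem_iUnion.mpr ⟨n, hkn⟩)

/-- A lower semicontinuous submeasure on `ω` is nonpathological iff it is σ-nonpathological. -/
theorem stmt3 (φ : Set ℕ → ℝ≥0∞) (hφ : IsSubmeasure φ) (hlsc : IsLSC φ) :
    (∀ A, hat φ A = φ A) ↔ (∀ A, hatSigma φ A = φ A) := by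
  classical
  constructor
  · intro hhat A
    refine le_antisymm (hatSigma_le_phi A) ?_
    rw [hlsc A]
    refine iSup₂_le fun F hF => ?_
    obtain ⟨hFA, hFfin⟩ := hF
    have hmono : hatSigma φ F ≤ hatSigma φ A :=
      iSup₂_le fun μ hμ => le_trans (fa_mono hμ.1.1 hFA) (le_iSup₂_of_le μ hμ le_rfl)
    refine le_trans ?_ hmono
    rw [← hhat F]
    refine iSup₂_le fun μ hμ => ?_
    set s := hFfin.toFinset with hs
    have hFs : F = ↑s := (Set.Finite.coe_toFinset hFfin).symm
    set ν : Set ℕ → ℝ≥0∞ := fun B => ∑ k ∈ s, if k ∈ B then μ {k} else 0 with hν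
    have hν_eq : ∀ B, ν B = μ (B ∩ F) := by
      intro B
      have hBF : B ∩ F = ↑(s.filter (· ∈ B)) := by
        ext k
        simp only [Set.mem_inter_iff, Finset.coe_filter, Set.mem_setOf_eq, hFs,
          Finset.mem_coe]
        tauto
      rw [hBF, fa_finset hμ.1, Finset.sum_filter]
    have hνle : ∀ B, ν B ≤ φ B := fun B => by
      rw [hν_eq B]
      exact le_trans (hμ.2 _) (hφ.2.1 _ _ Set.inter_subset_left)
    have hνfa : IsFAMeasure ν := by
      constructor
      · rw [hν_eq, Set.empty_inter]; exact hμ.1.1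
      · intro A B hAB
        rw [hν_eq, hν_eq, hν_eq, Set.union_inter_distrib_right,
          hμ.1.2 _ _ (hAB.mono Set.inter_subset_left Set.inter_subset_left)]
    have hνsig : IsSigmaMeasure ν := by
      refine ⟨hνfa, fun A hd => ?_⟩
      rw [hν]
      simp only
      rw [Summable.tsum_finsetSum (fun k _ => ENNReal.summable)]
      exact Finset.sum_congr rfl fun k _ => (tsum_ite_disjoint (μ {k}) A k hd).symm
    have hνF : ν F = μ F := by rw [hν_eq, Set.inter_self]
    calc μ F = ν F := hνF.symm
      _ ≤ hatSigma φ F := le_iSup₂_of_le ν ⟨hνsig, hνle⟩ le_rfl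
  · intro hsig A
    refine le_antisymm (hat_le_phi A) ?_
    rw [← hsig A]
    exact iSup₂_le fun μ hμ => le_iSup₂_of_le μ ⟨hμ.1.1, hμ.2⟩ le_rfl
end

section
/- If μ_n is a measure on a set X for every n ∈ ω, then the function φ(A) = limsup_{n→∞} μ_n(A) is a nonpathological submeasure on X. -/
open Filter
open scoped ENNReal

lemma myFA_mono {X : Type*} {m : Set X → ℝ≥0∞} (hm : IsFAMeasure m)
    {A B : Set X} (h : A ⊆ B) : m A ≤ m B := by
  have : m B = m A + m (B \ A) := by
    rw [← hm.2 A (B \ A) Set.disjoint_sdiff_right, Set.union_diff_cancel h]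
  rw [this]; exact le_self_add

lemma myClusterPt (f : ℕ → ℝ≥0∞) :
    MapClusterPt (limsup f atTop) atTop f := by
  rw [mapClusterPt_iff_frequently]
  intro s hs
  rcases eq_or_ne (limsup f atTop) ⊤ with h | h
  · rw [h] at hs
    obtain ⟨a, ha, has⟩ := ENNReal.nhds_top_basis.mem_iff.1 hs
    have := frequently_lt_of_lt_limsup (u := f) (f := atTop)
      (b := a) (h := by rw [h]; exact ha)
    exact this.mono fun n hn => has hn
  · obtain ⟨ε, hε, hεs⟩ := (ENNReal.hasBasis_nhds_of_ne_top' h).mem_iff.1 hs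
    have hup : ∀ᶠ n in atTop, f n < limsup f atTop + ε :=
      eventually_lt_of_limsup_lt (ENNReal.lt_add_right h hε)
    have hlow : ∃ᶠ n in atTop, limsup f atTop - ε ≤ f n := by
      rcases eq_or_ne (limsup f atTop - ε) 0 with h0 | h0
      · exact Frequently.of_forall fun n => by simp [h0]
      · have hlt : limsup f atTop - ε < limsup f atTop :=
          ENNReal.sub_lt_self h (fun hL0 => h0 (by simp [hL0, zero_tsub])) hε
        exact (frequently_lt_of_lt_limsup (h := hlt)).mono fun n hn => hn.le
    exact (hlow.and_eventually hup).mono fun n ⟨h1, h2⟩ => hεs ⟨h1, h2.le⟩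

lemma myUltraTendsto (U : Ultrafilter ℕ) (g : ℕ → ℝ≥0∞) :
    Tendsto g (U : Filter ℕ) (nhds (limsup g U)) := by
  have h := (U.map g).le_nhds_lim
  have : limsup g (U : Filter ℕ) = (U.map g).lim :=
    Filter.Tendsto.limsup_eq h
  rw [this]; exact h

open scoped NNReal in
lemma myLimsupAdd (u v : ℕ → ℝ≥0∞) :
    limsup (fun n => u n + v n) atTop ≤ limsup u atTop + limsup v atTop := by
  refine ENNReal.le_of_forall_pos_le_add fun (ε : ℝ≥0) (hε : 0 < ε) hlt => ?_
  have hL1 : limsup u atTop ≠ ⊤ := fun h => by simp [h] at hlt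
  have hL2 : limsup v atTop ≠ ⊤ := fun h => by simp [h] at hlt
  have hε2 : ((ε / 2 : ℝ≥0) : ℝ≥0∞) ≠ 0 := by
    simpa using (half_pos hε).ne'
  have h1 : limsup u atTop < limsup u atTop + ↑(ε / 2) := ENNReal.lt_add_right hL1 hε2
  have h2 : limsup v atTop < limsup v atTop + ↑(ε / 2) := ENNReal.lt_add_right hL2 hε2
  have key : ∀ᶠ n in atTop, u n + v n ≤ limsup u atTop + limsup v atTop + ↑ε := by
    filter_upwards [eventually_lt_of_limsup_lt h1, eventually_lt_of_limsup_lt h2] with n g1 g2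
    calc u n + v n ≤ (limsup u atTop + ↑(ε / 2)) + (limsup v atTop + ↑(ε / 2)) :=
          add_le_add g1.le g2.le
      _ = limsup u atTop + limsup v atTop + (↑(ε / 2) + ↑(ε / 2)) := by
          rw [add_add_add_comm]
      _ = limsup u atTop + limsup v atTop + ↑ε := by
          rw [← ENNReal.coe_add, add_halves]
  exact limsup_le_of_le (by isBoundedDefault) key

lemma myFA_subadd {X : Type*} {m : Set X → ℝ≥0∞} (hm : IsFAMeasure m)
    (A B : Set X) : m (A ∪ B) ≤ m A + m B := by
  have h1 : m (A ∪ B) = m A + m (B \ A) := by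
    rw [← hm.2 A (B \ A) Set.disjoint_sdiff_right, Set.union_diff_self]
  rw [h1]
  exact add_le_add_right (myFA_mono hm Set.diff_subset) _

/-- If `μ n` is a measure on `X` for every `n ∈ ω`, then
`φ A = limsup_{n → ∞} μ n A` is a nonpathological submeasure on `X`. -/
theorem stmt7 {X : Type*} (μ : ℕ → Set X → ℝ≥0∞) (hμ : ∀ n, IsFAMeasure (μ n)) :
    IsSubmeasure (fun A => Filter.limsup (fun n => μ n A) Filter.atTop) ∧
    ∀ A, hat (fun A => Filter.limsup (fun n => μ n A) Filter.atTop) A =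
      Filter.limsup (fun n => μ n A) Filter.atTop := by
  constructor
  · refine ⟨?_, ?_, ?_⟩
    · simp only [(hμ _).1]
      exact limsup_const 0
    · intro A B hAB
      exact limsup_le_limsup (Eventually.of_forall fun n => myFA_mono (hμ n) hAB)
    · intro A B
      calc limsup (fun n => μ n (A ∪ B)) atTop
          ≤ limsup (fun n => μ n A + μ n B) atTop :=
            limsup_le_limsup (Eventually.of_forall fun n => myFA_subadd (hμ n) A B)
        _ ≤ _ := myLimsupAdd _ _
  · intro A
    apply le_antisymm
    · exact iSup₂_le fun m hm => hm.2 A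
    · obtain ⟨U, hUle, hUt⟩ := mapClusterPt_iff_ultrafilter.1 (myClusterPt (fun n => μ n A))
      set ν : Set X → ℝ≥0∞ := fun B => limsup (fun n => μ n B) (U : Filter ℕ) with hν
      have hνle : ∀ B, ν B ≤ limsup (fun n => μ n B) atTop :=
        fun B => limsup_le_limsup_of_le hUle
      have hνFA : IsFAMeasure ν := by
        constructor
        · simp only [hν, (hμ _).1]
          exact limsup_const 0
        · intro A' B' hd
          have t1 : Tendsto (fun n => μ n (A' ∪ B')) (U : Filter ℕ) (nhds (ν (A' ∪ B'))) :=
            myUltraTendsto U _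
          have t2 : Tendsto (fun n => μ n (A' ∪ B')) (U : Filter ℕ) (nhds (ν A' + ν B')) := by
            have h := (myUltraTendsto U (fun n => μ n A')).add (myUltraTendsto U (fun n => μ n B'))
            exact h.congr fun n => ((hμ n).2 A' B' hd).symm
          exact tendsto_nhds_unique t1 t2
      have hνA : ν A = limsup (fun n => μ n A) atTop := hUt.limsup_eq
      calc limsup (fun n => μ n A) atTop = ν A := hνA.symm
        _ ≤ _ := le_iSup₂_of_le ν ⟨hνFA, hνle⟩ le_rfl
end

section
/- Let φ and ψ be submeasures on ω and define, on X = {0,1} × ω, (φ ⊕_m ψ)(A) = max{φ(A₀), ψ(A₁)} and (φ ⊕_s ψ)(A) = φ(A₀) + ψ(A₁), where A₀ = {n : (0,n) ∈ A} and A₁ = {n : (1,n) ∈ A}. Then for every C ⊆ X: (1) (φ ⊕_m ψ)̂(C) ≥ max{φ̂(C₀), ψ̂(C₁)}; (2) (φ ⊕_s ψ)̂(C) = φ̂(C₀) + ψ̂(C₁). The same two properties hold with φ̂ and ψ̂ replaced by φ̂_σ and ψ̂_σ respectively. -/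
open Filter
open scoped ENNReal

/-- `(φ ⊕_m ψ)(A) = max (φ A₀) (ψ A₁)` on `{0,1} × ω`. -/
noncomputable def oplusM (φ ψ : Set ℕ → ℝ≥0∞) : Set (Fin 2 × ℕ) → ℝ≥0∞ :=
  fun A => max (φ {n | ((0 : Fin 2), n) ∈ A}) (ψ {n | ((1 : Fin 2), n) ∈ A})

/-- `(φ ⊕_s ψ)(A) = φ A₀ + ψ A₁` on `{0,1} × ω`. -/
noncomputable def oplusS (φ ψ : Set ℕ → ℝ≥0∞) : Set (Fin 2 × ℕ) → ℝ≥0∞ :=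
  fun A => φ {n | ((0 : Fin 2), n) ∈ A} + ψ {n | ((1 : Fin 2), n) ∈ A}

section Aux

/-- slice -/
def sl (i : Fin 2) (A : Set (Fin 2 × ℕ)) : Set ℕ := {n | (i, n) ∈ A}

lemma sl_union (i : Fin 2) (A B : Set (Fin 2 × ℕ)) :
    sl i (A ∪ B) = sl i A ∪ sl i B := rfl

lemma sl_iUnion (i : Fin 2) (A : ℕ → Set (Fin 2 × ℕ)) :
    sl i (⋃ n, A n) = ⋃ n, sl i (A n) := by
  ext n; simp [sl, Set.mem_iUnion]

lemma sl_disjoint (i : Fin 2) {A B : Set (Fin 2 × ℕ)} (h : Disjoint A B) :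
    Disjoint (sl i A) (sl i B) := by
  rw [Set.disjoint_left] at h ⊢
  intro n hA hB; exact h hA hB

/-- embedding of a set of naturals into slice i -/
def emb (i : Fin 2) (A : Set ℕ) : Set (Fin 2 × ℕ) := {p | p.1 = i ∧ p.2 ∈ A}

lemma emb_empty (i : Fin 2) : emb i (∅ : Set ℕ) = ∅ := by
  ext p; simp [emb]

lemma emb_union (i : Fin 2) (A B : Set ℕ) : emb i (A ∪ B) = emb i A ∪ emb i B := by
  ext p; simp only [emb, Set.mem_union, Set.mem_setOf_eq]; tauto

lemma emb_iUnion (i : Fin 2) (A : ℕ → Set ℕ) : emb i (⋃ n, A n) = ⋃ n, emb i (A n) := by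
  ext p; simp only [emb, Set.mem_iUnion, Set.mem_setOf_eq]; tauto

lemma emb_disjoint (i : Fin 2) {A B : Set ℕ} (h : Disjoint A B) :
    Disjoint (emb i A) (emb i B) := by
  rw [Set.disjoint_left] at h ⊢
  rintro p ⟨_, hA⟩ ⟨_, hB⟩; exact h hA hB

lemma sl_emb_same (i : Fin 2) (A : Set ℕ) : sl i (emb i A) = A := by
  ext n; simp [sl, emb]

lemma sl_emb_ne (i j : Fin 2) (h : j ≠ i) (A : Set ℕ) : sl j (emb i A) = ∅ := by
  ext n; simp [sl, emb, h]

lemma emb_sl (i : Fin 2) (C : Set (Fin 2 × ℕ)) : emb i (sl i C) = C ∩ {p | p.1 = i} := by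
  ext ⟨a, b⟩
  simp only [emb, sl, Set.mem_setOf_eq, Set.mem_inter_iff]
  constructor
  · rintro ⟨rfl, h⟩; exact ⟨h, rfl⟩
  · rintro ⟨h, rfl⟩; exact ⟨rfl, h⟩

lemma decomp (C : Set (Fin 2 × ℕ)) : C = (emb 0 (sl 0 C)) ∪ (emb 1 (sl 1 C)) := by
  rw [emb_sl, emb_sl]
  ext ⟨a, b⟩
  have ha : a = 0 ∨ a = 1 := by
    rcases a with ⟨av, hav⟩
    interval_cases av <;> simp
  simp only [Set.mem_union, Set.mem_inter_iff, Set.mem_setOf_eq]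
  rcases ha with rfl | rfl <;> simp

lemma emb_disj (C : Set (Fin 2 × ℕ)) :
    Disjoint (emb 0 (sl 0 C)) (emb 1 (sl 1 C)) := by
  rw [Set.disjoint_left]
  rintro p ⟨h0, _⟩ ⟨h1, _⟩
  rw [h0] at h1; exact absurd h1 (by decide)

lemma lift_fa {μ ν : Set ℕ → ℝ≥0∞} (hμ : IsFAMeasure μ) (hν : IsFAMeasure ν) :
    IsFAMeasure (fun A : Set (Fin 2 × ℕ) => μ (sl 0 A) + ν (sl 1 A)) := by
  refine ⟨?_, ?_⟩
  · show μ (sl 0 ∅) + ν (sl 1 ∅) = 0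
    have h0 : sl (0 : Fin 2) (∅ : Set (Fin 2 × ℕ)) = ∅ := rfl
    have h1 : sl (1 : Fin 2) (∅ : Set (Fin 2 × ℕ)) = ∅ := rfl
    rw [h0, h1, hμ.1, hν.1, add_zero]
  · intro A B h
    show μ (sl 0 (A ∪ B)) + ν (sl 1 (A ∪ B)) = _
    rw [sl_union, sl_union, hμ.2 _ _ (sl_disjoint _ h), hν.2 _ _ (sl_disjoint _ h)]
    ring

lemma lift_sigma {μ ν : Set ℕ → ℝ≥0∞} (hμ : IsSigmaMeasure μ) (hν : IsSigmaMeasure ν) :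
    IsSigmaMeasure (fun A : Set (Fin 2 × ℕ) => μ (sl 0 A) + ν (sl 1 A)) := by
  refine ⟨lift_fa hμ.1 hν.1, ?_⟩
  intro A hA
  show μ (sl 0 (⋃ n, A n)) + ν (sl 1 (⋃ n, A n)) = _
  rw [sl_iUnion, sl_iUnion,
    hμ.2 _ (fun m n hmn => sl_disjoint _ (hA hmn)),
    hν.2 _ (fun m n hmn => sl_disjoint _ (hA hmn)), ENNReal.tsum_add]

lemma restr_fa (i : Fin 2) {lam : Set (Fin 2 × ℕ) → ℝ≥0∞} (hl : IsFAMeasure lam) :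
    IsFAMeasure (fun A : Set ℕ => lam (emb i A)) := by
  refine ⟨?_, ?_⟩
  · show lam (emb i ∅) = 0
    rw [emb_empty, hl.1]
  · intro A B h
    show lam (emb i (A ∪ B)) = _
    rw [emb_union, hl.2 _ _ (emb_disjoint _ h)]

lemma restr_sigma (i : Fin 2) {lam : Set (Fin 2 × ℕ) → ℝ≥0∞} (hl : IsSigmaMeasure lam) :
    IsSigmaMeasure (fun A : Set ℕ => lam (emb i A)) := by
  refine ⟨restr_fa i hl.1, ?_⟩
  intro A hA
  show lam (emb i (⋃ n, A n)) = _
  rw [emb_iUnion, hl.2 _ (fun m n hmn => emb_disjoint _ (hA hmn))]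

lemma zero_fa {X : Type*} : IsFAMeasure (fun _ : Set X => (0 : ℝ≥0∞)) :=
  ⟨rfl, fun _ _ _ => by simp⟩

lemma zero_sigma {X : Type*} : IsSigmaMeasure (fun _ : Set X => (0 : ℝ≥0∞)) :=
  ⟨zero_fa, fun _ _ => by simp⟩

end Aux

lemma le_hat {X : Type*} {φ μ : Set X → ℝ≥0∞}
    (h : IsFAMeasure μ ∧ ∀ B, μ B ≤ φ B) (A : Set X) : μ A ≤ hat φ A :=
  le_iSup₂ (f := fun (m : Set X → ℝ≥0∞) (_ : IsFAMeasure m ∧ ∀ B, m B ≤ φ B) => m A) μ h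

lemma hat_le {X : Type*} {φ : Set X → ℝ≥0∞} {A : Set X} {c : ℝ≥0∞}
    (h : ∀ μ : Set X → ℝ≥0∞, IsFAMeasure μ → (∀ B, μ B ≤ φ B) → μ A ≤ c) : hat φ A ≤ c :=
  iSup₂_le fun μ hm => h μ hm.1 hm.2

lemma le_hatSigma {X : Type*} {φ μ : Set X → ℝ≥0∞}
    (h : IsSigmaMeasure μ ∧ ∀ B, μ B ≤ φ B) (A : Set X) : μ A ≤ hatSigma φ A :=
  le_iSup₂ (f := fun (m : Set X → ℝ≥0∞) (_ : IsSigmaMeasure m ∧ ∀ B, m B ≤ φ B) => m A) μ h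

lemma hatSigma_le {X : Type*} {φ : Set X → ℝ≥0∞} {A : Set X} {c : ℝ≥0∞}
    (h : ∀ μ : Set X → ℝ≥0∞, IsSigmaMeasure μ → (∀ B, μ B ≤ φ B) → μ A ≤ c) :
    hatSigma φ A ≤ c :=
  iSup₂_le fun μ hm => h μ hm.1 hm.2

lemma hat_subtype {X : Type*} (φ : Set X → ℝ≥0∞) (A : Set X) :
    hat φ A = ⨆ m : {μ : Set X → ℝ≥0∞ // IsFAMeasure μ ∧ ∀ B, μ B ≤ φ B}, m.1 A :=
  iSup_subtype'

lemma hatSigma_subtype {X : Type*} (φ : Set X → ℝ≥0∞) (A : Set X) :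
    hatSigma φ A = ⨆ m : {μ : Set X → ℝ≥0∞ // IsSigmaMeasure μ ∧ ∀ B, μ B ≤ φ B}, m.1 A :=
  iSup_subtype'

/-- For submeasures `φ, ψ` on `ω` and every `C ⊆ {0,1} × ω`:
`(φ ⊕_m ψ)̂ C ≥ max (φ̂ C₀) (ψ̂ C₁)` and `(φ ⊕_s ψ)̂ C = φ̂ C₀ + ψ̂ C₁`, and the same
holds for the σ-versions. -/
theorem stmt9 (φ ψ : Set ℕ → ℝ≥0∞) (hφ : IsSubmeasure φ) (hψ : IsSubmeasure ψ) :
    ∀ C : Set (Fin 2 × ℕ),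
      hat (oplusM φ ψ) C ≥
        max (hat φ {n | ((0 : Fin 2), n) ∈ C}) (hat ψ {n | ((1 : Fin 2), n) ∈ C}) ∧
      hat (oplusS φ ψ) C =
        hat φ {n | ((0 : Fin 2), n) ∈ C} + hat ψ {n | ((1 : Fin 2), n) ∈ C} ∧
      hatSigma (oplusM φ ψ) C ≥
        max (hatSigma φ {n | ((0 : Fin 2), n) ∈ C}) (hatSigma ψ {n | ((1 : Fin 2), n) ∈ C}) ∧
      hatSigma (oplusS φ ψ) C =
        hatSigma φ {n | ((0 : Fin 2), n) ∈ C} + hatSigma ψ {n | ((1 : Fin 2), n) ∈ C} := by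
  intro C
  have oM : ∀ A, oplusM φ ψ A = max (φ (sl 0 A)) (ψ (sl 1 A)) := fun A => rfl
  have oS : ∀ A, oplusS φ ψ A = φ (sl 0 A) + ψ (sl 1 A) := fun A => rfl
  have hC0 : {n | ((0 : Fin 2), n) ∈ C} = sl 0 C := rfl
  have hC1 : {n | ((1 : Fin 2), n) ∈ C} = sl 1 C := rfl
  -- lifted measures are below oplusM / oplusS
  have liftM_le : ∀ (μ ν : Set ℕ → ℝ≥0∞), (∀ B, μ B ≤ φ B) → (∀ B, ν B ≤ ψ B) →
      (ν = fun _ => 0) ∨ (μ = fun _ => 0) →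
      ∀ A, μ (sl 0 A) + ν (sl 1 A) ≤ oplusM φ ψ A := by
    rintro μ ν hμ hν (rfl | rfl) A <;> rw [oM] <;> simp only [add_zero, zero_add]
    · exact le_trans (hμ _) (le_max_left _ _)
    · exact le_trans (hν _) (le_max_right _ _)
  have liftS_le : ∀ (μ ν : Set ℕ → ℝ≥0∞), (∀ B, μ B ≤ φ B) → (∀ B, ν B ≤ ψ B) →
      ∀ A, μ (sl 0 A) + ν (sl 1 A) ≤ oplusS φ ψ A := by
    intro μ ν hμ hν A; rw [oS]; exact add_le_add (hμ _) (hν _)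
  -- restriction bounds
  have restr0_le : ∀ A, oplusS φ ψ (emb 0 A) ≤ φ A := by
    intro A
    rw [oS, sl_emb_same, sl_emb_ne 0 1 (by decide), hψ.1, add_zero]
  have restr1_le : ∀ A, oplusS φ ψ (emb 1 A) ≤ ψ A := by
    intro A
    rw [oS, sl_emb_same, sl_emb_ne 1 0 (by decide), hφ.1, zero_add]
  have hzφ : (∀ B, (fun _ : Set ℕ => (0:ℝ≥0∞)) B ≤ φ B) := fun B => zero_le
  have hzψ : (∀ B, (fun _ : Set ℕ => (0:ℝ≥0∞)) B ≤ ψ B) := fun B => zero_le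
  refine ⟨?_, le_antisymm ?_ ?_, ?_, le_antisymm ?_ ?_⟩
  -- (1) oplusM, hat
  · rw [hC0, hC1]
    refine max_le ?_ ?_
    · refine hat_le fun μ hμ hle => ?_
      have := le_hat (φ := oplusM φ ψ)
        ⟨lift_fa hμ zero_fa, liftM_le μ _ hle hzψ (Or.inl rfl)⟩ C
      simpa using this
    · refine hat_le fun ν hν hle => ?_
      have := le_hat (φ := oplusM φ ψ)
        ⟨lift_fa zero_fa hν, liftM_le _ ν hzφ hle (Or.inr rfl)⟩ C
      simpa using this
  -- (2) oplusS ≤, hat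
  · rw [hC0, hC1]
    refine hat_le fun lam hfa hle => ?_
    have hd : lam C = lam (emb 0 (sl 0 C)) + lam (emb 1 (sl 1 C)) := by
      conv_lhs => rw [decomp C]
      exact hfa.2 _ _ (emb_disj C)
    rw [hd]
    refine add_le_add ?_ ?_
    · exact le_hat ⟨restr_fa 0 hfa, fun B => le_trans (hle _) (restr0_le B)⟩ (sl 0 C)
    · exact le_hat ⟨restr_fa 1 hfa, fun B => le_trans (hle _) (restr1_le B)⟩ (sl 1 C)
  -- (2) oplusS ≥, hat
  · rw [hC0, hC1, hat_subtype φ, hat_subtype ψ]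
    have : Nonempty {μ : Set ℕ → ℝ≥0∞ // IsFAMeasure μ ∧ ∀ B, μ B ≤ φ B} :=
      ⟨⟨fun _ => 0, zero_fa, hzφ⟩⟩
    have : Nonempty {μ : Set ℕ → ℝ≥0∞ // IsFAMeasure μ ∧ ∀ B, μ B ≤ ψ B} :=
      ⟨⟨fun _ => 0, zero_fa, hzψ⟩⟩
    refine ENNReal.iSup_add_iSup_le fun m n => ?_
    exact le_hat (φ := oplusS φ ψ)
      ⟨lift_fa m.2.1 n.2.1, liftS_le _ _ m.2.2 n.2.2⟩ C
  -- (3) oplusM, hatSigma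
  · rw [hC0, hC1]
    refine max_le ?_ ?_
    · refine hatSigma_le fun μ hμ hle => ?_
      have := le_hatSigma (φ := oplusM φ ψ)
        ⟨lift_sigma hμ zero_sigma, liftM_le μ _ hle hzψ (Or.inl rfl)⟩ C
      simpa using this
    · refine hatSigma_le fun ν hν hle => ?_
      have := le_hatSigma (φ := oplusM φ ψ)
        ⟨lift_sigma zero_sigma hν, liftM_le _ ν hzφ hle (Or.inr rfl)⟩ C
      simpa using this
  -- (4) oplusS ≤, hatSigma
  · rw [hC0, hC1]
    refine hatSigma_le fun lam hsa hle => ?_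
    have hd : lam C = lam (emb 0 (sl 0 C)) + lam (emb 1 (sl 1 C)) := by
      conv_lhs => rw [decomp C]
      exact hsa.1.2 _ _ (emb_disj C)
    rw [hd]
    refine add_le_add ?_ ?_
    · exact le_hatSigma ⟨restr_sigma 0 hsa, fun B => le_trans (hle _) (restr0_le B)⟩ (sl 0 C)
    · exact le_hatSigma ⟨restr_sigma 1 hsa, fun B => le_trans (hle _) (restr1_le B)⟩ (sl 1 C)
  -- (4) oplusS ≥, hatSigma
  · rw [hC0, hC1, hatSigma_subtype φ, hatSigma_subtype ψ]
    have : Nonempty {μ : Set ℕ → ℝ≥0∞ // IsSigmaMeasure μ ∧ ∀ B, μ B ≤ φ B} :=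
      ⟨⟨fun _ => 0, zero_sigma, hzφ⟩⟩
    have : Nonempty {μ : Set ℕ → ℝ≥0∞ // IsSigmaMeasure μ ∧ ∀ B, μ B ≤ ψ B} :=
      ⟨⟨fun _ => 0, zero_sigma, hzψ⟩⟩
    refine ENNReal.iSup_add_iSup_le fun m n => ?_
    exact le_hatSigma (φ := oplusS φ ψ)
      ⟨lift_sigma m.2.1 n.2.1, liftS_le _ _ m.2.2 n.2.2⟩ C
end

section
/- Let φ and ψ be submeasures on ω and define, on X = {0,1} × ω, (φ ⊕_m ψ)(A) = max{φ(A₀), ψ(A₁)} and (φ ⊕_s ψ)(A) = φ(A₀) + ψ(A₁), where A₀ = {n : (0,n) ∈ A} and A₁ = {n : (1,n) ∈ A}. Then P(φ ⊕_m ψ) = max{P(φ), P(ψ)} and P(φ ⊕_s ψ) = max{P(φ), P(ψ)}. The same equalities hold for P_σ and for P_Fin. -/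
open Filter
open scoped ENNReal

namespace S10

-- ==================== pratio lemmas ====================

theorem pratio_anti {a b b' : ℝ≥0∞} (h : b ≤ b') : pratio a b' ≤ pratio a b := by
  unfold pratio
  split_ifs with h1 h2 h2
  · exact le_rfl
  · rcases h1 with ⟨ha, hb'⟩ | ⟨ha, hb'⟩
    · exact absurd (Or.inl ⟨ha, le_antisymm (hb' ▸ h) zero_le⟩) h2
    · subst ha
      have hb : b ≠ ⊤ := fun hb => h2 (Or.inr ⟨rfl, hb⟩)
      rw [ENNReal.top_div, if_neg hb]
      exact le_top
  · rcases h2 with ⟨ha, hb⟩ | ⟨ha, hb⟩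
    · simp [ha]
    · exact absurd (Or.inr ⟨ha, top_le_iff.mp (hb ▸ h)⟩) h1
  · exact ENNReal.div_le_div le_rfl h

theorem one_le_pratio {a b : ℝ≥0∞} (h : b ≤ a) : 1 ≤ pratio a b := by
  unfold pratio
  split_ifs with h1
  · exact le_rfl
  · rcases eq_or_ne b 0 with hb0 | hb0
    · subst hb0
      have ha : a ≠ 0 := fun ha => h1 (Or.inl ⟨ha, rfl⟩)
      rw [ENNReal.div_zero ha]; exact le_top
    · rcases eq_or_ne b ⊤ with hbt | hbt
      · exact absurd (Or.inr ⟨top_le_iff.mp (hbt ▸ h), hbt⟩) h1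
      · rw [ENNReal.le_div_iff_mul_le (Or.inl hb0) (Or.inl hbt), one_mul]; exact h

theorem le_mul_of_pratio_le {a b M : ℝ≥0∞} (hba : b ≤ a) (h : pratio a b ≤ M)
    (hM : M ≠ ⊤) : a ≤ M * b := by
  have h1 : 1 ≤ M := (one_le_pratio hba).trans h
  unfold pratio at h
  split_ifs at h with hc
  · rcases hc with ⟨ha, hb⟩ | ⟨ha, hb⟩
    · simp [ha]
    · subst ha; subst hb
      rw [ENNReal.mul_top (by positivity)]
  · rcases eq_or_ne b 0 with hb0 | hb0
    · subst hb0
      have ha : a ≠ 0 := fun ha => hc (Or.inl ⟨ha, rfl⟩)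
      rw [ENNReal.div_zero ha] at h
      exact absurd (top_le_iff.mp h) hM
    · rcases eq_or_ne b ⊤ with hbt | hbt
      · exact absurd (Or.inr ⟨top_le_iff.mp (hbt ▸ hba), hbt⟩) hc
      · calc a = a / b * b := (ENNReal.div_mul_cancel hb0 hbt).symm
          _ ≤ M * b := mul_le_mul_left h b

theorem pratio_le_of_le_mul {a b M : ℝ≥0∞} (hba : b ≤ a) (h1 : 1 ≤ M)
    (h : a ≤ M * b) : pratio a b ≤ M := by
  unfold pratio
  split_ifs with hc
  · exact h1
  · exact ENNReal.div_le_of_le_mul h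

theorem pratio_add_le {a b c d : ℝ≥0∞} (hba : b ≤ a) (hdc : d ≤ c) :
    pratio (a + c) (b + d) ≤ max (pratio a b) (pratio c d) := by
  set M := max (pratio a b) (pratio c d) with hM
  rcases eq_or_ne M ⊤ with hMt | hMt
  · rw [hMt]; exact le_top
  have h1 : 1 ≤ M := (one_le_pratio hba).trans (le_max_left _ _)
  have ha : a ≤ M * b := le_mul_of_pratio_le hba (le_max_left _ _) hMt
  have hc : c ≤ M * d := le_mul_of_pratio_le hdc (le_max_right _ _) hMt
  exact pratio_le_of_le_mul (add_le_add hba hdc) h1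
    (by calc a + c ≤ M * b + M * d := add_le_add ha hc
          _ = M * (b + d) := (mul_add M b d).symm)

theorem pratio_max_le {a b c d : ℝ≥0∞} (hba : b ≤ a) (hdc : d ≤ c) :
    pratio (max a c) (max b d) ≤ max (pratio a b) (pratio c d) := by
  rcases le_total c a with h | h
  · rw [max_eq_left h]
    exact (pratio_anti (le_max_left b d)).trans (le_max_left _ _)
  · rw [max_eq_right h]
    exact (pratio_anti (le_max_right b d)).trans (le_max_right _ _)

-- ==================== measure transfer ====================

variable {X Y : Type*}

theorem isFA_image {f : X → Y} (hf : Function.Injective f) {μ : Set Y → ℝ≥0∞}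
    (h : IsFAMeasure μ) : IsFAMeasure fun B => μ (f '' B) := by
  refine ⟨by simpa using h.1, fun A B hd => ?_⟩
  simp only [Set.image_union]
  exact h.2 _ _ (Set.disjoint_image_of_injective hf hd)

theorem isSigma_image {f : X → Y} (hf : Function.Injective f) {μ : Set Y → ℝ≥0∞}
    (h : IsSigmaMeasure μ) : IsSigmaMeasure fun B => μ (f '' B) := by
  refine ⟨isFA_image hf h.1, fun A hd => ?_⟩
  simp only [Set.image_iUnion]
  exact h.2 _ fun m n hmn => Set.disjoint_image_of_injective hf (hd hmn)

theorem isFA_preimage (g : X → Y) {ν : Set X → ℝ≥0∞} (h : IsFAMeasure ν) :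
    IsFAMeasure fun A : Set Y => ν (g ⁻¹' A) := by
  refine ⟨by simpa using h.1, fun A B hd => ?_⟩
  simp only [Set.preimage_union]
  exact h.2 _ _ (hd.preimage g)

theorem isSigma_preimage (g : X → Y) {ν : Set X → ℝ≥0∞} (h : IsSigmaMeasure ν) :
    IsSigmaMeasure fun A : Set Y => ν (g ⁻¹' A) := by
  refine ⟨isFA_preimage g h.1, fun A hd => ?_⟩
  simp only [Set.preimage_iUnion]
  exact h.2 _ fun m n hmn => (hd hmn).preimage g

theorem isFA_add {μ ν : Set X → ℝ≥0∞} (h1 : IsFAMeasure μ) (h2 : IsFAMeasure ν) :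
    IsFAMeasure fun A => μ A + ν A := by
  refine ⟨by show μ ∅ + ν ∅ = 0; rw [h1.1, h2.1, add_zero], fun A B hd => ?_⟩
  show μ (A ∪ B) + ν (A ∪ B) = _
  rw [h1.2 _ _ hd, h2.2 _ _ hd]; ring

theorem isSigma_add {μ ν : Set X → ℝ≥0∞} (h1 : IsSigmaMeasure μ) (h2 : IsSigmaMeasure ν) :
    IsSigmaMeasure fun A => μ A + ν A := by
  refine ⟨isFA_add h1.1 h2.1, fun A hd => ?_⟩
  show μ (⋃ n, A n) + ν (⋃ n, A n) = _
  rw [h1.2 _ hd, h2.2 _ hd, ENNReal.tsum_add]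

theorem isSigma_zero : IsSigmaMeasure fun _ : Set X => (0 : ℝ≥0∞) :=
  ⟨⟨rfl, by simp⟩, by simp⟩

-- ==================== hat lemmas ====================

theorem hat_le_self (φ : Set X → ℝ≥0∞) (A : Set X) : hat φ A ≤ φ A :=
  iSup_le fun μ => iSup_le fun h => h.2 A

theorem hatSigma_le_self (φ : Set X → ℝ≥0∞) (A : Set X) : hatSigma φ A ≤ φ A :=
  iSup_le fun μ => iSup_le fun h => h.2 A

theorem le_hat {φ μ : Set X → ℝ≥0∞} (hμ : IsFAMeasure μ) (hle : ∀ B, μ B ≤ φ B)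
    (A : Set X) : μ A ≤ hat φ A :=
  le_iSup_of_le μ (le_iSup (fun _ : IsFAMeasure μ ∧ ∀ B, μ B ≤ φ B => μ A) ⟨hμ, hle⟩)

theorem le_hatSigma {φ μ : Set X → ℝ≥0∞} (hμ : IsSigmaMeasure μ) (hle : ∀ B, μ B ≤ φ B)
    (A : Set X) : μ A ≤ hatSigma φ A :=
  le_iSup_of_le μ (le_iSup (fun _ : IsSigmaMeasure μ ∧ ∀ B, μ B ≤ φ B => μ A) ⟨hμ, hle⟩)

theorem hat_comp_eq {op : Set Y → ℝ≥0∞} {φ : Set X → ℝ≥0∞} {f : X → Y}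
    (hf : Function.Injective f) (h1 : ∀ B, op (f '' B) = φ B)
    (h2 : ∀ A, φ (f ⁻¹' A) ≤ op A) (B : Set X) :
    hat op (f '' B) = hat φ B := by
  apply le_antisymm
  · refine iSup_le fun μ => iSup_le fun hμ => ?_
    exact le_hat (isFA_image hf hμ.1) (fun C => (hμ.2 _).trans_eq (h1 C)) B
  · refine iSup_le fun ν => iSup_le fun hν => ?_
    have := le_hat (φ := op) (isFA_preimage f hν.1)
      (fun A => (hν.2 _).trans (h2 A)) (f '' B)
    simpa [Set.preimage_image_eq B hf] using this

theorem hatSigma_comp_eq {op : Set Y → ℝ≥0∞} {φ : Set X → ℝ≥0∞} {f : X → Y}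
    (hf : Function.Injective f) (h1 : ∀ B, op (f '' B) = φ B)
    (h2 : ∀ A, φ (f ⁻¹' A) ≤ op A) (B : Set X) :
    hatSigma op (f '' B) = hatSigma φ B := by
  apply le_antisymm
  · refine iSup_le fun μ => iSup_le fun hμ => ?_
    exact le_hatSigma (isSigma_image hf hμ.1) (fun C => (hμ.2 _).trans_eq (h1 C)) B
  · refine iSup_le fun ν => iSup_le fun hν => ?_
    have := le_hatSigma (φ := op) (isSigma_preimage f hν.1)
      (fun A => (hν.2 _).trans (h2 A)) (f '' B)
    simpa [Set.preimage_image_eq B hf] using this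

theorem hat_preimage_le {op : Set Y → ℝ≥0∞} {φ : Set X → ℝ≥0∞} {f : X → Y}
    (h2 : ∀ A, φ (f ⁻¹' A) ≤ op A) (A : Set Y) :
    hat φ (f ⁻¹' A) ≤ hat op A :=
  iSup_le fun ν => iSup_le fun hν =>
    le_hat (isFA_preimage f hν.1) (fun C => (hν.2 _).trans (h2 C)) A

theorem hatSigma_preimage_le {op : Set Y → ℝ≥0∞} {φ : Set X → ℝ≥0∞} {f : X → Y}
    (h2 : ∀ A, φ (f ⁻¹' A) ≤ op A) (A : Set Y) :
    hatSigma φ (f ⁻¹' A) ≤ hatSigma op A :=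
  iSup_le fun ν => iSup_le fun hν =>
    le_hatSigma (isSigma_preimage f hν.1) (fun C => (hν.2 _).trans (h2 C)) A

end S10

namespace S10

def f0 : ℕ → Fin 2 × ℕ := fun n => ((0 : Fin 2), n)
def f1 : ℕ → Fin 2 × ℕ := fun n => ((1 : Fin 2), n)

theorem f0_inj : Function.Injective f0 := fun a b h => congrArg Prod.snd h
theorem f1_inj : Function.Injective f1 := fun a b h => congrArg Prod.snd h

theorem s0_f0 (B : Set ℕ) : {n | ((0 : Fin 2), n) ∈ f0 '' B} = B := by
  ext n; simp [f0]

theorem s1_f0 (B : Set ℕ) : {n | ((1 : Fin 2), n) ∈ f0 '' B} = (∅ : Set ℕ) := by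
  ext n; simp [f0, Prod.ext_iff]

theorem s0_f1 (B : Set ℕ) : {n | ((0 : Fin 2), n) ∈ f1 '' B} = (∅ : Set ℕ) := by
  ext n; simp [f1, Prod.ext_iff]

theorem s1_f1 (B : Set ℕ) : {n | ((1 : Fin 2), n) ∈ f1 '' B} = B := by
  ext n; simp [f1]

variable {φ ψ : Set ℕ → ℝ≥0∞}

theorem oplusM_f0 (hψ : ψ ∅ = 0) (B : Set ℕ) : oplusM φ ψ (f0 '' B) = φ B := by
  rw [oplusM, s0_f0, s1_f0, hψ, max_eq_left zero_le]

theorem oplusM_f1 (hφ : φ ∅ = 0) (B : Set ℕ) : oplusM φ ψ (f1 '' B) = ψ B := by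
  rw [oplusM, s0_f1, s1_f1, hφ, max_eq_right zero_le]

theorem oplusS_f0 (hψ : ψ ∅ = 0) (B : Set ℕ) : oplusS φ ψ (f0 '' B) = φ B := by
  rw [oplusS, s0_f0, s1_f0, hψ, add_zero]

theorem oplusS_f1 (hφ : φ ∅ = 0) (B : Set ℕ) : oplusS φ ψ (f1 '' B) = ψ B := by
  rw [oplusS, s0_f1, s1_f1, hφ, zero_add]

theorem sM0 (A : Set (Fin 2 × ℕ)) : φ (f0 ⁻¹' A) ≤ oplusM φ ψ A := le_max_left _ _
theorem sM1 (A : Set (Fin 2 × ℕ)) : ψ (f1 ⁻¹' A) ≤ oplusM φ ψ A := le_max_right _ _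
theorem sS0 (A : Set (Fin 2 × ℕ)) : φ (f0 ⁻¹' A) ≤ oplusS φ ψ A := le_self_add
theorem sS1 (A : Set (Fin 2 × ℕ)) : ψ (f1 ⁻¹' A) ≤ oplusS φ ψ A := le_add_self

-- sum lower bound for hat of oplusS
theorem hat_oplusS_ge (A : Set (Fin 2 × ℕ)) :
    hat φ (f0 ⁻¹' A) + hat ψ (f1 ⁻¹' A) ≤ hat (oplusS φ ψ) A := by
  have n0 : Nonempty {μ : Set ℕ → ℝ≥0∞ // IsFAMeasure μ ∧ ∀ B, μ B ≤ φ B} :=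
    ⟨⟨fun _ => 0, isSigma_zero.1, fun _ => zero_le⟩⟩
  have n1 : Nonempty {μ : Set ℕ → ℝ≥0∞ // IsFAMeasure μ ∧ ∀ B, μ B ≤ ψ B} :=
    ⟨⟨fun _ => 0, isSigma_zero.1, fun _ => zero_le⟩⟩
  rw [hat, hat, iSup_subtype', iSup_subtype', ENNReal.iSup_add]
  refine iSup_le fun p => ?_
  rw [ENNReal.add_iSup]
  refine iSup_le fun q => ?_
  have key : ∀ C, p.1 (f0 ⁻¹' C) + q.1 (f1 ⁻¹' C) ≤ oplusS φ ψ C := fun C =>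
    add_le_add (p.2.2 _) (q.2.2 _)
  exact le_hat (isFA_add (isFA_preimage f0 p.2.1) (isFA_preimage f1 q.2.1)) key A

theorem hatSigma_oplusS_ge (A : Set (Fin 2 × ℕ)) :
    hatSigma φ (f0 ⁻¹' A) + hatSigma ψ (f1 ⁻¹' A) ≤ hatSigma (oplusS φ ψ) A := by
  have n0 : Nonempty {μ : Set ℕ → ℝ≥0∞ // IsSigmaMeasure μ ∧ ∀ B, μ B ≤ φ B} :=
    ⟨⟨fun _ => 0, isSigma_zero, fun _ => zero_le⟩⟩
  have n1 : Nonempty {μ : Set ℕ → ℝ≥0∞ // IsSigmaMeasure μ ∧ ∀ B, μ B ≤ ψ B} :=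
    ⟨⟨fun _ => 0, isSigma_zero, fun _ => zero_le⟩⟩
  rw [hatSigma, hatSigma, iSup_subtype', iSup_subtype', ENNReal.iSup_add]
  refine iSup_le fun p => ?_
  rw [ENNReal.add_iSup]
  refine iSup_le fun q => ?_
  have key : ∀ C, p.1 (f0 ⁻¹' C) + q.1 (f1 ⁻¹' C) ≤ oplusS φ ψ C := fun C =>
    add_le_add (p.2.2 _) (q.2.2 _)
  exact le_hatSigma (isSigma_add (isSigma_preimage f0 p.2.1) (isSigma_preimage f1 q.2.1)) key A

end S10

namespace S10

variable {φ ψ : Set ℕ → ℝ≥0∞}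

theorem oplusM_eq (A : Set (Fin 2 × ℕ)) :
    oplusM φ ψ A = max (φ (f0 ⁻¹' A)) (ψ (f1 ⁻¹' A)) := rfl

theorem oplusS_eq (A : Set (Fin 2 × ℕ)) :
    oplusS φ ψ A = φ (f0 ⁻¹' A) + ψ (f1 ⁻¹' A) := rfl

section main
variable (hφ : IsSubmeasure φ) (hψ : IsSubmeasure ψ)
include hφ hψ

theorem degP_M : degP (oplusM φ ψ) = max (degP φ) (degP ψ) := by
  apply le_antisymm
  · refine iSup_le fun A => ?_
    calc pratio (oplusM φ ψ A) (hat (oplusM φ ψ) A)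
        ≤ pratio (oplusM φ ψ A) (max (hat φ (f0 ⁻¹' A)) (hat ψ (f1 ⁻¹' A))) :=
          pratio_anti (max_le (hat_preimage_le sM0 A) (hat_preimage_le sM1 A))
      _ ≤ max (pratio (φ (f0 ⁻¹' A)) (hat φ (f0 ⁻¹' A)))
            (pratio (ψ (f1 ⁻¹' A)) (hat ψ (f1 ⁻¹' A))) := by
          rw [oplusM_eq]; exact pratio_max_le (hat_le_self _ _) (hat_le_self _ _)
      _ ≤ max (degP φ) (degP ψ) := by
          unfold degP
          exact max_le_max (le_iSup (fun B => pratio (φ B) (hat φ B)) (f0 ⁻¹' A))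
            (le_iSup (fun B => pratio (ψ B) (hat ψ B)) (f1 ⁻¹' A))
  · refine max_le (iSup_le fun B => ?_) (iSup_le fun B => ?_)
    · refine le_iSup_of_le (f0 '' B) (le_of_eq ?_)
      rw [oplusM_f0 hψ.1, hat_comp_eq f0_inj (oplusM_f0 hψ.1) sM0]
    · refine le_iSup_of_le (f1 '' B) (le_of_eq ?_)
      rw [oplusM_f1 hφ.1, hat_comp_eq f1_inj (oplusM_f1 hφ.1) sM1]

theorem degP_S : degP (oplusS φ ψ) = max (degP φ) (degP ψ) := by
  apply le_antisymm
  · refine iSup_le fun A => ?_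
    calc pratio (oplusS φ ψ A) (hat (oplusS φ ψ) A)
        ≤ pratio (oplusS φ ψ A) (hat φ (f0 ⁻¹' A) + hat ψ (f1 ⁻¹' A)) :=
          pratio_anti (hat_oplusS_ge A)
      _ ≤ max (pratio (φ (f0 ⁻¹' A)) (hat φ (f0 ⁻¹' A)))
            (pratio (ψ (f1 ⁻¹' A)) (hat ψ (f1 ⁻¹' A))) := by
          rw [oplusS_eq]; exact pratio_add_le (hat_le_self _ _) (hat_le_self _ _)
      _ ≤ max (degP φ) (degP ψ) := by
          unfold degP
          exact max_le_max (le_iSup (fun B => pratio (φ B) (hat φ B)) (f0 ⁻¹' A))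
            (le_iSup (fun B => pratio (ψ B) (hat ψ B)) (f1 ⁻¹' A))
  · refine max_le (iSup_le fun B => ?_) (iSup_le fun B => ?_)
    · refine le_iSup_of_le (f0 '' B) (le_of_eq ?_)
      rw [oplusS_f0 hψ.1, hat_comp_eq f0_inj (oplusS_f0 hψ.1) sS0]
    · refine le_iSup_of_le (f1 '' B) (le_of_eq ?_)
      rw [oplusS_f1 hφ.1, hat_comp_eq f1_inj (oplusS_f1 hφ.1) sS1]

theorem degPSigma_M : degPSigma (oplusM φ ψ) = max (degPSigma φ) (degPSigma ψ) := by
  apply le_antisymm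
  · refine iSup_le fun A => ?_
    calc pratio (oplusM φ ψ A) (hatSigma (oplusM φ ψ) A)
        ≤ pratio (oplusM φ ψ A) (max (hatSigma φ (f0 ⁻¹' A)) (hatSigma ψ (f1 ⁻¹' A))) :=
          pratio_anti (max_le (hatSigma_preimage_le sM0 A) (hatSigma_preimage_le sM1 A))
      _ ≤ max (pratio (φ (f0 ⁻¹' A)) (hatSigma φ (f0 ⁻¹' A)))
            (pratio (ψ (f1 ⁻¹' A)) (hatSigma ψ (f1 ⁻¹' A))) := by
          rw [oplusM_eq]; exact pratio_max_le (hatSigma_le_self _ _) (hatSigma_le_self _ _)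
      _ ≤ max (degPSigma φ) (degPSigma ψ) := by
          unfold degPSigma
          exact max_le_max (le_iSup (fun B => pratio (φ B) (hatSigma φ B)) (f0 ⁻¹' A))
            (le_iSup (fun B => pratio (ψ B) (hatSigma ψ B)) (f1 ⁻¹' A))
  · refine max_le (iSup_le fun B => ?_) (iSup_le fun B => ?_)
    · refine le_iSup_of_le (f0 '' B) (le_of_eq ?_)
      rw [oplusM_f0 hψ.1, hatSigma_comp_eq f0_inj (oplusM_f0 hψ.1) sM0]
    · refine le_iSup_of_le (f1 '' B) (le_of_eq ?_)
      rw [oplusM_f1 hφ.1, hatSigma_comp_eq f1_inj (oplusM_f1 hφ.1) sM1]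

theorem degPSigma_S : degPSigma (oplusS φ ψ) = max (degPSigma φ) (degPSigma ψ) := by
  apply le_antisymm
  · refine iSup_le fun A => ?_
    calc pratio (oplusS φ ψ A) (hatSigma (oplusS φ ψ) A)
        ≤ pratio (oplusS φ ψ A) (hatSigma φ (f0 ⁻¹' A) + hatSigma ψ (f1 ⁻¹' A)) :=
          pratio_anti (hatSigma_oplusS_ge A)
      _ ≤ max (pratio (φ (f0 ⁻¹' A)) (hatSigma φ (f0 ⁻¹' A)))
            (pratio (ψ (f1 ⁻¹' A)) (hatSigma ψ (f1 ⁻¹' A))) := by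
          rw [oplusS_eq]; exact pratio_add_le (hatSigma_le_self _ _) (hatSigma_le_self _ _)
      _ ≤ max (degPSigma φ) (degPSigma ψ) := by
          unfold degPSigma
          exact max_le_max (le_iSup (fun B => pratio (φ B) (hatSigma φ B)) (f0 ⁻¹' A))
            (le_iSup (fun B => pratio (ψ B) (hatSigma ψ B)) (f1 ⁻¹' A))
  · refine max_le (iSup_le fun B => ?_) (iSup_le fun B => ?_)
    · refine le_iSup_of_le (f0 '' B) (le_of_eq ?_)
      rw [oplusS_f0 hψ.1, hatSigma_comp_eq f0_inj (oplusS_f0 hψ.1) sS0]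
    · refine le_iSup_of_le (f1 '' B) (le_of_eq ?_)
      rw [oplusS_f1 hφ.1, hatSigma_comp_eq f1_inj (oplusS_f1 hφ.1) sS1]

theorem degPFin_M : degPFin (oplusM φ ψ) = max (degPFin φ) (degPFin ψ) := by
  apply le_antisymm
  · refine iSup_le fun A => iSup_le fun hA => ?_
    calc pratio (oplusM φ ψ A) (hat (oplusM φ ψ) A)
        ≤ pratio (oplusM φ ψ A) (max (hat φ (f0 ⁻¹' A)) (hat ψ (f1 ⁻¹' A))) :=
          pratio_anti (max_le (hat_preimage_le sM0 A) (hat_preimage_le sM1 A))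
      _ ≤ max (pratio (φ (f0 ⁻¹' A)) (hat φ (f0 ⁻¹' A)))
            (pratio (ψ (f1 ⁻¹' A)) (hat ψ (f1 ⁻¹' A))) := by
          rw [oplusM_eq]; exact pratio_max_le (hat_le_self _ _) (hat_le_self _ _)
      _ ≤ max (degPFin φ) (degPFin ψ) := by
          unfold degPFin
          exact max_le_max (le_iSup₂_of_le (f0 ⁻¹' A) (hA.preimage f0_inj.injOn) le_rfl)
            (le_iSup₂_of_le (f1 ⁻¹' A) (hA.preimage f1_inj.injOn) le_rfl)
  · refine max_le (iSup_le fun B => iSup_le fun hB => ?_)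
      (iSup_le fun B => iSup_le fun hB => ?_)
    · refine le_iSup₂_of_le (f0 '' B) (hB.image f0) (le_of_eq ?_)
      rw [oplusM_f0 hψ.1, hat_comp_eq f0_inj (oplusM_f0 hψ.1) sM0]
    · refine le_iSup₂_of_le (f1 '' B) (hB.image f1) (le_of_eq ?_)
      rw [oplusM_f1 hφ.1, hat_comp_eq f1_inj (oplusM_f1 hφ.1) sM1]

theorem degPFin_S : degPFin (oplusS φ ψ) = max (degPFin φ) (degPFin ψ) := by
  apply le_antisymm
  · refine iSup_le fun A => iSup_le fun hA => ?_
    calc pratio (oplusS φ ψ A) (hat (oplusS φ ψ) A)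
        ≤ pratio (oplusS φ ψ A) (hat φ (f0 ⁻¹' A) + hat ψ (f1 ⁻¹' A)) :=
          pratio_anti (hat_oplusS_ge A)
      _ ≤ max (pratio (φ (f0 ⁻¹' A)) (hat φ (f0 ⁻¹' A)))
            (pratio (ψ (f1 ⁻¹' A)) (hat ψ (f1 ⁻¹' A))) := by
          rw [oplusS_eq]; exact pratio_add_le (hat_le_self _ _) (hat_le_self _ _)
      _ ≤ max (degPFin φ) (degPFin ψ) := by
          unfold degPFin
          exact max_le_max (le_iSup₂_of_le (f0 ⁻¹' A) (hA.preimage f0_inj.injOn) le_rfl)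
            (le_iSup₂_of_le (f1 ⁻¹' A) (hA.preimage f1_inj.injOn) le_rfl)
  · refine max_le (iSup_le fun B => iSup_le fun hB => ?_)
      (iSup_le fun B => iSup_le fun hB => ?_)
    · refine le_iSup₂_of_le (f0 '' B) (hB.image f0) (le_of_eq ?_)
      rw [oplusS_f0 hψ.1, hat_comp_eq f0_inj (oplusS_f0 hψ.1) sS0]
    · refine le_iSup₂_of_le (f1 '' B) (hB.image f1) (le_of_eq ?_)
      rw [oplusS_f1 hφ.1, hat_comp_eq f1_inj (oplusS_f1 hφ.1) sS1]

end main
end S10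

/-- For submeasures `φ, ψ` on `ω`: `P(φ ⊕_m ψ) = max (P φ) (P ψ)` and
`P(φ ⊕_s ψ) = max (P φ) (P ψ)`; the same equalities hold for `P_σ` and `P_Fin`. -/
theorem stmt10 (φ ψ : Set ℕ → ℝ≥0∞) (hφ : IsSubmeasure φ) (hψ : IsSubmeasure ψ) :
    degP (oplusM φ ψ) = max (degP φ) (degP ψ) ∧
    degP (oplusS φ ψ) = max (degP φ) (degP ψ) ∧
    degPSigma (oplusM φ ψ) = max (degPSigma φ) (degPSigma ψ) ∧
    degPSigma (oplusS φ ψ) = max (degPSigma φ) (degPSigma ψ) ∧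
    degPFin (oplusM φ ψ) = max (degPFin φ) (degPFin ψ) ∧
    degPFin (oplusS φ ψ) = max (degPFin φ) (degPFin ψ) :=
  ⟨S10.degP_M hφ hψ, S10.degP_S hφ hψ, S10.degPSigma_M hφ hψ, S10.degPSigma_S hφ hψ,
    S10.degPFin_M hφ hψ, S10.degPFin_S hφ hψ⟩
end

section
/- Let I_ε = {A ⊆ ℕ : limsup_{n→∞} ln(|A ∩ [0,n)|)/ln(n) = 0} be the ideal of sets of exponential density zero. There is no family 𝓕 of finite subsets of ℕ and no function f : ℕ → (0,∞) such that I_ε = I_{f,𝓕}, where I_{f,𝓕} = Exh(sup_{F∈𝓕} μ_{f,F}) with μ_{f,F}(A) = ∑_{i ∈ A∩F} f(i). -/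
open Filter
open scoped ENNReal

/-- The measure `μ_{f,F} A = ∑_{i ∈ A ∩ F} f i` (as an `ℝ≥0∞`-valued function). -/
noncomputable def muFF (f : ℕ → ℝ) (F : Set ℕ) (A : Set ℕ) : ℝ≥0∞ :=
  ∑' i : ↥(A ∩ F), ENNReal.ofReal (f i)

/-- The exhaustive ideal of a submeasure `φ` on `ℕ`. -/
def Exh (φ : Set ℕ → ℝ≥0∞) : Set (Set ℕ) :=
  {A | Tendsto (fun n => φ (A \ Set.Iio n)) atTop (nhds 0)}

/-- The ideal of sets of exponential density zero. -/
noncomputable def expDensityZero : Set (Set ℕ) :=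
  {A | Filter.limsup (fun n => Real.log ((A ∩ Set.Iio n).ncard : ℝ) / Real.log n) atTop = 0}

/-! ### Auxiliary lemmas about `expDensityZero` -/

lemma ratio_nonneg (A : Set ℕ) (n : ℕ) :
    0 ≤ Real.log ((A ∩ Set.Iio n).ncard : ℝ) / Real.log n :=
  div_nonneg (Real.log_natCast_nonneg _) (Real.log_natCast_nonneg _)

lemma cnt_le (A : Set ℕ) (n : ℕ) : (A ∩ Set.Iio n).ncard ≤ n := by
  have h1 : (A ∩ Set.Iio n).ncard ≤ (Set.Iio n).ncard :=
    Set.ncard_le_ncard Set.inter_subset_right (Set.finite_Iio n)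
  have h2 : (Set.Iio n).ncard = n := by
    rw [← Finset.coe_Iio, Set.ncard_coe_finset, Nat.card_Iio]
  omega

lemma ratio_le_one (A : Set ℕ) (n : ℕ) (hn : 2 ≤ n) :
    Real.log ((A ∩ Set.Iio n).ncard : ℝ) / Real.log n ≤ 1 := by
  have hlogn : 0 < Real.log n := by
    apply Real.log_pos; exact_mod_cast hn
  rw [div_le_one hlogn]
  rcases Nat.eq_zero_or_pos (A ∩ Set.Iio n).ncard with h | h
  · rw [h]; simpa using hlogn.le
  · apply Real.log_le_log (by exact_mod_cast h)
    exact_mod_cast cnt_le A n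

/-- A set whose counting function is "sub-polynomial" has exponential density zero. -/
lemma mem_expDensityZero_of (A : Set ℕ)
    (h : ∀ m : ℕ, 0 < m → ∀ᶠ n : ℕ in atTop, ((A ∩ Set.Iio n).ncard) ^ m ≤ n) :
    A ∈ expDensityZero := by
  have ht : Tendsto (fun n : ℕ => Real.log ((A ∩ Set.Iio n).ncard : ℝ) / Real.log n)
      atTop (nhds 0) := by
    rw [tendsto_order]
    constructor
    · intro a ha
      filter_upwards [eventually_ge_atTop 0] with n _
      exact lt_of_lt_of_le ha (ratio_nonneg A n)
    · intro a ha
      obtain ⟨m, hm⟩ := exists_nat_one_div_lt ha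
      filter_upwards [h (m+1) (Nat.succ_pos m), eventually_ge_atTop 2] with n hn h2
      refine lt_of_le_of_lt ?_ hm
      have hlogn : 0 < Real.log n := Real.log_pos (by exact_mod_cast h2)
      rw [div_le_div_iff₀ hlogn (by positivity), one_mul]
      have : Real.log (((A ∩ Set.Iio n).ncard : ℝ) ^ (m+1)) ≤ Real.log n := by
        rcases Nat.eq_zero_or_pos (A ∩ Set.Iio n).ncard with h0 | h0
        · rw [h0]; push_cast; rw [zero_pow (by omega), Real.log_zero]; exact hlogn.le
        · apply Real.log_le_log (by positivity)
          exact_mod_cast hn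
      rw [Real.log_pow] at this
      push_cast at this ⊢
      nlinarith [Real.log_natCast_nonneg (A ∩ Set.Iio n).ncard]
  exact ht.limsup_eq

/-- A set whose counting function is at least `n^(1/K)` infinitely often does not have
exponential density zero. -/
lemma not_mem_expDensityZero_of (A : Set ℕ) (K : ℕ) (hK : 0 < K)
    (h : ∀ M : ℕ, ∃ n, M ≤ n ∧ 2 ≤ n ∧ n ≤ ((A ∩ Set.Iio n).ncard) ^ K) :
    A ∉ expDensityZero := by
  intro hA
  have hb : IsBoundedUnder (· ≤ ·) atTop
      (fun n : ℕ => Real.log ((A ∩ Set.Iio n).ncard : ℝ) / Real.log n) := by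
    refine isBoundedUnder_of ⟨1, fun n => ?_⟩
    rcases le_or_gt 2 n with hn | hn
    · exact ratio_le_one A n hn
    · have : (A ∩ Set.Iio n).ncard ≤ 1 := le_trans (cnt_le A n) (by omega)
      have hl : Real.log ((A ∩ Set.Iio n).ncard : ℝ) = 0 := by
        interval_cases c : (A ∩ Set.Iio n).ncard <;> simp
      rw [hl, zero_div]; norm_num
  have hfreq : ∃ᶠ n : ℕ in atTop,
      (1 : ℝ) / K ≤ Real.log ((A ∩ Set.Iio n).ncard : ℝ) / Real.log n := by
    rw [frequently_atTop]
    intro M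
    obtain ⟨n, hMn, h2, hle⟩ := h M
    refine ⟨n, hMn, ?_⟩
    have hlogn : 0 < Real.log n := Real.log_pos (by exact_mod_cast h2)
    have hc : 0 < (A ∩ Set.Iio n).ncard := by
      rcases Nat.eq_zero_or_pos (A ∩ Set.Iio n).ncard with h0 | h0
      · rw [h0, Nat.zero_pow (by omega)] at hle; omega
      · exact h0
    rw [div_le_div_iff₀ (by positivity) hlogn, one_mul]
    have : Real.log n ≤ Real.log (((A ∩ Set.Iio n).ncard : ℝ) ^ K) := by
      apply Real.log_le_log (by positivity)
      exact_mod_cast hle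
    rw [Real.log_pow] at this
    push_cast at this ⊢
    linarith
  have hls := le_limsup_of_frequently_le hfreq hb
  rw [hA] at hls
  have : (0:ℝ) < 1 / K := by positivity
  linarith

lemma univ_not_mem_expDensityZero : (Set.univ : Set ℕ) ∉ expDensityZero := by
  refine not_mem_expDensityZero_of _ 1 one_pos fun M => ⟨M + 2, by omega, by omega, ?_⟩
  rw [Set.univ_inter]
  have h2 : (Set.Iio (M+2) : Set ℕ).ncard = M + 2 := by
    rw [← Finset.coe_Iio, Set.ncard_coe_finset, Nat.card_Iio]
  rw [h2, pow_one]

/-! ### Auxiliary lemmas about the submeasure -/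

lemma muFF_eq (f : ℕ → ℝ) (F A : Set ℕ) :
    muFF f F A = ∑' i, (A ∩ F).indicator (fun j => ENNReal.ofReal (f j)) i :=
  tsum_subtype (A ∩ F) (fun j => ENNReal.ofReal (f j))

lemma muFF_mono (f : ℕ → ℝ) (F : Set ℕ) {A B : Set ℕ} (h : A ⊆ B) :
    muFF f F A ≤ muFF f F B := by
  rw [muFF_eq, muFF_eq]
  refine ENNReal.tsum_le_tsum fun i => ?_
  exact Set.indicator_le_indicator_of_subset (Set.inter_subset_inter_left F h)
    (fun j => zero_le) i

lemma phi_mono (𝓕 : Set (Set ℕ)) (f : ℕ → ℝ) {A B : Set ℕ} (h : A ⊆ B) :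
    (⨆ F ∈ 𝓕, muFF f F A) ≤ ⨆ F ∈ 𝓕, muFF f F B :=
  iSup₂_mono fun F _ => muFF_mono f F h

lemma ofReal_sum_le_phi (𝓕 : Set (Set ℕ)) (f : ℕ → ℝ) (hf : ∀ i, 0 ≤ f i)
    (A F : Set ℕ) (B : Finset ℕ) (hF : F ∈ 𝓕) (hBF : ↑B ⊆ F) (hBA : ↑B ⊆ A) :
    ENNReal.ofReal (∑ i ∈ B, f i) ≤ ⨆ F ∈ 𝓕, muFF f F A := by
  have h1 : ENNReal.ofReal (∑ i ∈ B, f i) ≤ muFF f F A := by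
    rw [muFF_eq, ENNReal.ofReal_sum_of_nonneg (fun i _ => hf i)]
    calc ∑ i ∈ B, ENNReal.ofReal (f i)
        = ∑ i ∈ B, (A ∩ F).indicator (fun j => ENNReal.ofReal (f j)) i := by
          refine Finset.sum_congr rfl fun i hi => ?_
          rw [Set.indicator_of_mem (Set.mem_inter (hBA (Finset.mem_coe.mpr hi))
            (hBF (Finset.mem_coe.mpr hi)))]
      _ ≤ _ := ENNReal.sum_le_tsum B
  exact h1.trans (le_iSup₂_of_le F hF le_rfl)

lemma phi_le_tsum_of_cover (𝓕 : Set (Set ℕ)) (f : ℕ → ℝ) (hf : ∀ i, 0 ≤ f i)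
    (A : Set ℕ) (P : ℕ → Finset ℕ) (hA : A ⊆ ⋃ m, ↑(P m)) :
    (⨆ F ∈ 𝓕, muFF f F A) ≤ ∑' m, ENNReal.ofReal (∑ i ∈ P m, f i) := by
  refine iSup₂_le fun F _ => ?_
  rw [muFF_eq]
  have key : ∀ i : ℕ, (A ∩ F).indicator (fun j => ENNReal.ofReal (f j)) i
      ≤ ∑' m, (↑(P m) : Set ℕ).indicator (fun j => ENNReal.ofReal (f j)) i := by
    intro i
    by_cases hi : i ∈ A ∩ F
    · rw [Set.indicator_of_mem hi]
      obtain ⟨m, him⟩ := Set.mem_iUnion.1 (hA hi.1)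
      calc ENNReal.ofReal (f i)
          = (↑(P m) : Set ℕ).indicator (fun j => ENNReal.ofReal (f j)) i := by
            rw [Set.indicator_of_mem him]
        _ ≤ _ := ENNReal.le_tsum m
    · rw [Set.indicator_of_notMem hi]; exact zero_le
  calc ∑' i, (A ∩ F).indicator (fun j => ENNReal.ofReal (f j)) i
      ≤ ∑' i, ∑' m, (↑(P m) : Set ℕ).indicator (fun j => ENNReal.ofReal (f j)) i :=
        ENNReal.tsum_le_tsum key
    _ = ∑' m, ∑' i, (↑(P m) : Set ℕ).indicator (fun j => ENNReal.ofReal (f j)) i :=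
        ENNReal.tsum_comm
    _ ≤ _ := by
        refine ENNReal.tsum_le_tsum fun m => ?_
        rw [tsum_eq_sum (s := P m) (fun i hi => Set.indicator_of_notMem (by simpa using hi) _)]
        rw [ENNReal.ofReal_sum_of_nonneg]
        · exact le_of_eq (Finset.sum_congr rfl fun i hi =>
            Set.indicator_of_mem (by simpa using hi) _)
        · exact fun i _ => hf i

/-! ### Elementary real lemmas -/

lemma trim_lemma (f : ℕ → ℝ) (c e : ℝ) (he : 0 ≤ e) :
    ∀ (B : Finset ℕ), (∀ i ∈ B, 0 ≤ f i) → (∀ i ∈ B, f i ≤ e) → c ≤ ∑ i ∈ B, f i →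
      0 < c → ∃ B' ⊆ B, c ≤ ∑ i ∈ B', f i ∧ ∑ i ∈ B', f i ≤ c + e := by
  intro B
  induction B using Finset.strongInduction with
  | _ B ih =>
    intro h0 hle hc hcpos
    rcases le_or_gt (∑ i ∈ B, f i) (c + e) with h | h
    · exact ⟨B, Finset.Subset.refl B, hc, h⟩
    · have hne : B.Nonempty := by
        rcases B.eq_empty_or_nonempty with rfl | hne
        · simp at h; linarith
        · exact hne
      obtain ⟨x, hx⟩ := hne
      have hsub : B.erase x ⊂ B := Finset.erase_ssubset hx
      have hsum : ∑ i ∈ B.erase x, f i = (∑ i ∈ B, f i) - f x := by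
        rw [Finset.sum_erase_eq_sub hx]
      obtain ⟨B', hB'sub, h1, h2⟩ := ih (B.erase x) hsub
        (fun i hi => h0 i (Finset.mem_of_mem_erase hi))
        (fun i hi => hle i (Finset.mem_of_mem_erase hi))
        (by rw [hsum]; have := hle x hx; linarith) hcpos
      exact ⟨B', hB'sub.trans (Finset.erase_subset x B), h1, h2⟩

lemma markov_lemma (f : ℕ → ℝ) (B : Finset ℕ) (θ : ℝ) (h0 : ∀ i ∈ B, 0 ≤ f i) :
    ((B.filter (fun i => θ < f i)).card : ℝ) * θ ≤ ∑ i ∈ B, f i := by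
  calc ((B.filter (fun i => θ < f i)).card : ℝ) * θ
      = ∑ _i ∈ B.filter (fun i => θ < f i), θ := by rw [Finset.sum_const, nsmul_eq_mul]
    _ ≤ ∑ i ∈ B.filter (fun i => θ < f i), f i := by
        refine Finset.sum_le_sum fun i hi => (Finset.mem_filter.1 hi).2.le
    _ ≤ ∑ i ∈ B, f i := by
        refine Finset.sum_le_sum_of_subset_of_nonneg (Finset.filter_subset _ _)
          (fun i hi _ => h0 i hi)

/-! ### The recursive state for the "thin blocks" construction -/

private noncomputable def c1state (Bc : ℕ → ℕ → Finset ℕ) : ℕ → ℕ × ℕ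
  | 0 => (4, (Bc 1 4).card)
  | (i+1) =>
    let p := c1state Bc i
    let Ni1 := (Bc (i+1) p.1).sup id + p.1 + (p.2+1)^(2*(i+2)) + 2^(i+2) + 1
    (Ni1, p.2 + (Bc (i+2) Ni1).card)

/-- The key construction: if arbitrarily far out there are thin sets of mass at least `c`
captured by members of `𝓕`, we get a contradiction. -/
lemma C1 (𝓕 : Set (Set ℕ)) (f : ℕ → ℝ) (hf : ∀ i, 0 < f i)
    (hEq : expDensityZero = Exh (fun A => ⨆ F ∈ 𝓕, muFF f F A))
    (c : ℝ) (hc : 0 < c)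
    (hgood : ∀ k N : ℕ, ∃ F, F ∈ 𝓕 ∧ ∃ B : Finset ℕ, ↑B ⊆ F ∧ (∀ i ∈ B, N ≤ i) ∧
      c ≤ ∑ i ∈ B, f i ∧ ∀ n, ((B.filter (· < n)).card + 1)^k ≤ max n (2^k)) : False := by
  classical
  choose Fc hFc Bc hBF hBlo hBmass hBthin using hgood
  set NN : ℕ → ℕ := fun i => (c1state Bc i).1 with hNN
  set PP : ℕ → ℕ := fun i => (c1state Bc i).2 with hPP
  set B : ℕ → Finset ℕ := fun i => Bc (i+1) (NN i) with hB
  set FF : ℕ → Set ℕ := fun i => Fc (i+1) (NN i) with hFF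
  have hN0 : NN 0 = 4 := rfl
  have hNs : ∀ i, NN (i+1) = (B i).sup id + NN i + (PP i + 1)^(2*(i+2)) + 2^(i+2) + 1 := by
    intro i; simp only [hNN, hB, hPP, c1state]
  have hPs : ∀ i, PP (i+1) = PP i + (B (i+1)).card := by
    intro i
    simp only [hPP, hB, hNN, c1state]
  have hP0 : PP 0 = (B 0).card := rfl
  have hNmono : StrictMono NN := strictMono_nat_of_lt_succ (fun i => by
    have hpow : 1 ≤ 2^(i+2) := Nat.one_le_two_pow
    rw [hNs]; omega)
  have hNge : ∀ i, 2^(i+1) ≤ NN i := by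
    intro i
    cases i with
    | zero => rw [hN0]; omega
    | succ j =>
      have hpow : 2^(j+1+1) ≤ 2^(j+2) := Nat.pow_le_pow_right (by norm_num) (by omega)
      rw [hNs]; omega
  have hNP : ∀ i, (PP i + 1)^(2*(i+2)) ≤ NN (i+1) := by
    intro i
    have hpow : 1 ≤ 2^(i+2) := Nat.one_le_two_pow
    rw [hNs]; omega
  have hNB : ∀ i, ∀ x ∈ B i, x < NN (i+1) := by
    intro i x hx
    have h1 : x ≤ (B i).sup id := Finset.le_sup (f := id) hx
    have hpow : 1 ≤ 2^(i+2) := Nat.one_le_two_pow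
    rw [hNs]; omega
  have hBlo' : ∀ i, ∀ x ∈ B i, NN i ≤ x := fun i => hBlo (i+1) (NN i)
  have hPsum : ∀ i, ∑ j ∈ Finset.range (i+1), (B j).card = PP i := by
    intro i
    induction i with
    | zero => simp [hP0]
    | succ j ih => rw [Finset.sum_range_succ, ih, hPs]
  set A : Set ℕ := ⋃ i, (↑(B i) : Set ℕ) with hA
  -- counting bound
  have hAcnt : ∀ n i, n < NN (i+1) →
      (A ∩ Set.Iio n).ncard ≤ ∑ j ∈ Finset.range (i+1), ((B j).filter (· < n)).card := by
    intro n i hn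
    have hsub : A ∩ Set.Iio n ⊆
        ↑((Finset.range (i+1)).biUnion (fun j => (B j).filter (· < n))) := by
      rintro x ⟨hxA, hxn⟩
      obtain ⟨j, hj⟩ := Set.mem_iUnion.1 hxA
      have hjx : x ∈ B j := by exact_mod_cast hj
      have hji : j < i + 1 := by
        by_contra hge
        push_neg at hge
        have : NN (i+1) ≤ NN j := hNmono.monotone hge
        have := hBlo' j x hjx
        have hxn' : x < n := hxn
        omega
      simp only [Finset.coe_biUnion, Finset.mem_coe, Finset.mem_range, Set.mem_iUnion]
      exact ⟨j, by simpa using hji, Finset.mem_filter.2 ⟨hjx, hxn⟩⟩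
    calc (A ∩ Set.Iio n).ncard
        ≤ ((Finset.range (i+1)).biUnion (fun j => (B j).filter (· < n))).card := by
          rw [← Set.ncard_coe_finset]
          exact Set.ncard_le_ncard hsub (Finset.finite_toSet _)
      _ ≤ _ := Finset.card_biUnion_le
  -- A has exponential density zero
  have hAmem : A ∈ expDensityZero := by
    apply mem_expDensityZero_of
    intro m hm
    filter_upwards [eventually_ge_atTop (NN (2*m))] with n hn
    have hP0n : NN 0 ≤ n := by
      calc NN 0 ≤ NN (2*m) := hNmono.monotone (Nat.zero_le _)
        _ ≤ n := hn
    have key : ∃ i, NN i ≤ n ∧ n < NN (i+1) ∧ 2*m ≤ i := by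
      refine ⟨Nat.findGreatest (fun j => NN j ≤ n) n, ?_, ?_, ?_⟩
      · exact Nat.findGreatest_spec (P := fun j => NN j ≤ n) (m := 0) (Nat.zero_le n) hP0n
      · by_contra hcon
        push_neg at hcon
        have hle : Nat.findGreatest (fun j => NN j ≤ n) n + 1 ≤ n :=
          le_trans hNmono.le_apply hcon
        exact Nat.findGreatest_is_greatest (P := fun j => NN j ≤ n)
          (Nat.lt_succ_self _) hle hcon
      · by_contra hcon
        push_neg at hcon
        have h1 : NN (Nat.findGreatest (fun j => NN j ≤ n) n + 1) ≤ NN (2*m) :=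
          hNmono.monotone (by omega)
        have h2 : NN (Nat.findGreatest (fun j => NN j ≤ n) n) ≤ n :=
          Nat.findGreatest_spec (P := fun j => NN j ≤ n) (m := 0) (Nat.zero_le n) hP0n
        have h3 : n < NN (Nat.findGreatest (fun j => NN j ≤ n) n + 1) := by
          by_contra hcon2
          push_neg at hcon2
          have hle : Nat.findGreatest (fun j => NN j ≤ n) n + 1 ≤ n :=
            le_trans hNmono.le_apply hcon2
          exact Nat.findGreatest_is_greatest (P := fun j => NN j ≤ n)
            (Nat.lt_succ_self _) hle hcon2
        omega
    obtain ⟨i, hi1, hi2, hi3⟩ := key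
    obtain ⟨i', rfl⟩ : ∃ i', i = i' + 1 := ⟨i - 1, by omega⟩
    -- count bound
    have h1 : (A ∩ Set.Iio n).ncard ≤ PP i' + ((B (i'+1)).filter (· < n)).card := by
      have hthis := hAcnt n (i'+1) hi2
      rw [Finset.sum_range_succ] at hthis
      have hstep : ∑ j ∈ Finset.range (i'+1), ((B j).filter (· < n)).card ≤ PP i' := by
        rw [← hPsum i']
        exact Finset.sum_le_sum fun j _ => Finset.card_filter_le _ _
      omega
    obtain ⟨P', hP'⟩ : ∃ p, p = PP i' := ⟨_, rfl⟩
    obtain ⟨b, hbb⟩ : ∃ q, q = ((B (i'+1)).filter (· < n)).card := ⟨_, rfl⟩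
    rw [← hP', ← hbb] at h1
    have k3 : (P'+1)^(2*(i'+2)) ≤ n := by
      rw [hP']
      exact le_trans (hNP i') hi1
    have k5 : (b+1)^(i'+2) ≤ n := by
      rw [hbb]
      have k3 := hBthin (i'+2) (NN (i'+1)) n
      have k4 : max n (2^(i'+2)) = n := by
        have h6 : (2:ℕ)^(i'+2) ≤ NN (i'+1) := by
          have h7 := hNge (i'+1)
          have h8 : i' + 1 + 1 = i' + 2 := by omega
          rwa [h8] at h7
        exact max_eq_left (by omega)
      rwa [k4] at k3
    have e1 : ((P'+1)^m)^2 ≤ n := by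
      have k1 : ((P'+1)^m)^2 = (P'+1)^(2*m) := by rw [← pow_mul]; ring_nf
      have k2 : (P'+1)^(2*m) ≤ (P'+1)^(2*(i'+2)) :=
        Nat.pow_le_pow_right (by omega) (by omega)
      omega
    have e2 : ((b+1)^m)^2 ≤ n := by
      have k1 : ((b+1)^m)^2 = (b+1)^(2*m) := by rw [← pow_mul]; ring_nf
      have k2 : (b+1)^(2*m) ≤ (b+1)^(i'+2) :=
        Nat.pow_le_pow_right (by omega) (by omega)
      omega
    have e3 : (P'+1)^m * (b+1)^m ≤ n := by
      have k1 : ((P'+1)^m * (b+1)^m)^2 = ((P'+1)^m)^2 * ((b+1)^m)^2 := by ring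
      have k2 : ((P'+1)^m * (b+1)^m)^2 ≤ n^2 := by
        rw [k1]
        calc ((P'+1)^m)^2 * ((b+1)^m)^2 ≤ n * n :=
          Nat.mul_le_mul e1 e2
          _ = n^2 := by ring
      exact (Nat.pow_le_pow_iff_left two_ne_zero).1 k2
    calc (A ∩ Set.Iio n).ncard ^ m ≤ (P' + b)^m := Nat.pow_le_pow_left (by omega) m
      _ ≤ ((P'+1) * (b+1))^m := Nat.pow_le_pow_left (by nlinarith) m
      _ = (P'+1)^m * (b+1)^m := mul_pow _ _ _
      _ ≤ n := e3
  -- A is in the Exh ideal, hence its tails tend to zero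
  have hExh : Tendsto (fun n => ⨆ F ∈ 𝓕, muFF f F (A \ Set.Iio n)) atTop (nhds 0) := by
    have := hAmem
    rw [hEq] at this
    exact this
  have hev : ∀ᶠ n : ℕ in atTop,
      (⨆ F ∈ 𝓕, muFF f F (A \ Set.Iio n)) < ENNReal.ofReal c := by
    have hpos : (0:ℝ≥0∞) < ENNReal.ofReal c := ENNReal.ofReal_pos.2 hc
    exact hExh.eventually_lt_const hpos
  rw [eventually_atTop] at hev
  obtain ⟨M, hM⟩ := hev
  have hlt := hM (NN M) (le_trans hNmono.le_apply le_rfl)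
  have hge : ENNReal.ofReal c ≤ ⨆ F ∈ 𝓕, muFF f F (A \ Set.Iio (NN M)) := by
    refine le_trans (ENNReal.ofReal_le_ofReal (hBmass (M+1) (NN M))) ?_
    refine ofReal_sum_le_phi 𝓕 f (fun i => (hf i).le) _ (FF M) (B M)
      (hFc (M+1) (NN M)) (hBF (M+1) (NN M)) ?_
    intro x hx
    have hxB : x ∈ B M := by exact_mod_cast hx
    refine ⟨Set.mem_iUnion.2 ⟨M, by exact_mod_cast hxB⟩, ?_⟩
    simp only [Set.mem_Iio, not_lt]
    exact hBlo' M x hxB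
  exact absurd hlt (not_lt.2 hge)

/-- For every positive threshold, only finitely many points covered by `𝓕` have `f`-value
at least that threshold. -/
lemma heavy_finite (𝓕 : Set (Set ℕ)) (f : ℕ → ℝ) (hf : ∀ i, 0 < f i)
    (hEq : expDensityZero = Exh (fun A => ⨆ F ∈ 𝓕, muFF f F A))
    (c : ℝ) (hc : 0 < c) : {i : ℕ | (∃ F ∈ 𝓕, i ∈ F) ∧ c ≤ f i}.Finite := by
  by_contra hinf
  refine C1 𝓕 f hf hEq c hc fun k N => ?_
  have hex : ∃ t, t ∈ {i : ℕ | (∃ F ∈ 𝓕, i ∈ F) ∧ c ≤ f i} ∧ N ≤ t := by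
    by_contra hcon
    push_neg at hcon
    exact hinf (Set.Finite.subset (Set.finite_Iio N) (fun x hx => hcon x hx))
  obtain ⟨t, ⟨⟨F, hF, htF⟩, hcf⟩, hNt⟩ := hex
  refine ⟨F, hF, {t}, ?_, ?_, ?_, ?_⟩
  · intro x hx
    have : x = t := by simpa using hx
    rwa [this]
  · intro i hi
    have : i = t := by simpa using hi
    rwa [this]
  · simpa using hcf
  · intro n
    have h1 : (({t} : Finset ℕ).filter (· < n)).card + 1 ≤ 2 := by
      have := Finset.card_filter_le ({t} : Finset ℕ) (· < n)
      simp at this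
      omega
    calc ((({t} : Finset ℕ).filter (· < n)).card + 1)^k ≤ 2^k := Nat.pow_le_pow_left h1 k
      _ ≤ max n (2^k) := le_max_right _ _

set_option maxHeartbeats 2000000 in
/-- There is no family `𝓕` of finite subsets of `ℕ` and no `f : ℕ → (0,∞)` such that
`I_ε = I_{f,𝓕} = Exh (sup_{F ∈ 𝓕} μ_{f,F})`. -/
theorem stmt13 :
    ¬ ∃ (𝓕 : Set (Set ℕ)) (f : ℕ → ℝ), (∀ F ∈ 𝓕, F.Finite) ∧ (∀ i, 0 < f i) ∧
      expDensityZero = Exh (fun A => ⨆ F ∈ 𝓕, muFF f F A) := by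
  classical
  rintro ⟨𝓕, f, hfin, hf, hEq⟩
  -- `ℕ` is not in the exhaustive ideal, so tails of `univ` have measure bounded below.
  have hUnivNot : (Set.univ : Set ℕ) ∉ Exh (fun A => ⨆ F ∈ 𝓕, muFF f F A) := by
    rw [← hEq]; exact univ_not_mem_expDensityZero
  have hAnti : Antitone (fun n : ℕ => ⨆ F ∈ 𝓕, muFF f F (Set.univ \ Set.Iio n)) := by
    intro a b hab
    exact phi_mono 𝓕 f (Set.diff_subset_diff_right (Set.Iio_subset_Iio hab))
  have hTendInf := tendsto_atTop_iInf hAnti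
  set L := ⨅ n : ℕ, (⨆ F ∈ 𝓕, muFF f F (Set.univ \ Set.Iio n)) with hL
  have hLne : L ≠ 0 := by
    intro h0
    rw [h0] at hTendInf
    exact hUnivNot hTendInf
  set dE : ℝ≥0∞ := min L 1 / 2 with hdE
  have hminne : min L 1 ≠ 0 := by
    simp only [ne_eq, min_eq_iff]
    rintro (⟨h1, -⟩ | ⟨h1, -⟩)
    · exact hLne h1
    · exact one_ne_zero h1
  have hminT : min L 1 ≠ ⊤ := by
    intro h
    have := min_le_right L 1
    rw [h] at this
    exact absurd this (by simp)
  have hdET : dE ≠ ⊤ := by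
    rw [hdE]
    exact (ENNReal.div_lt_top hminT (by norm_num)).ne
  have hdEne : dE ≠ 0 := by
    rw [hdE]
    simp only [ne_eq, ENNReal.div_eq_zero_iff]
    push_neg
    exact ⟨hminne, by norm_num⟩
  have hdElt : ∀ n : ℕ, dE < ⨆ F ∈ 𝓕, muFF f F (Set.univ \ Set.Iio n) := by
    intro n
    have h1 : dE < min L 1 := ENNReal.half_lt_self hminne hminT
    have h2 : min L 1 ≤ L := min_le_left _ _
    have h3 : L ≤ ⨆ F ∈ 𝓕, muFF f F (Set.univ \ Set.Iio n) := iInf_le _ n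
    exact lt_of_lt_of_le h1 (le_trans h2 h3)
  set dr : ℝ := dE.toReal with hdr'
  have hdr : 0 < dr := ENNReal.toReal_pos hdEne hdET
  have hdEr : ENNReal.ofReal dr = dE := ENNReal.ofReal_toReal hdET
  -- Availability of far-out captured mass
  have hAvail : ∀ n : ℕ, ∃ F, F ∈ 𝓕 ∧ ∃ B : Finset ℕ, ↑B ⊆ F ∧ (∀ i ∈ B, n ≤ i) ∧
      dr < ∑ i ∈ B, f i := by
    intro n
    have h1 := hdElt n
    rw [lt_iSup_iff] at h1
    obtain ⟨F, h2⟩ := h1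
    rw [lt_iSup_iff] at h2
    obtain ⟨hF, h3⟩ := h2
    rw [muFF_eq, ENNReal.tsum_eq_iSup_sum, lt_iSup_iff] at h3
    obtain ⟨s, h4⟩ := h3
    set B := s.filter (fun i => i ∈ (Set.univ \ Set.Iio n) ∩ F) with hB
    have h5 : ∑ i ∈ s, ((Set.univ \ Set.Iio n) ∩ F).indicator
        (fun j => ENNReal.ofReal (f j)) i = ∑ i ∈ B, ENNReal.ofReal (f i) := by
      rw [hB, Finset.sum_filter]
      refine Finset.sum_congr rfl fun i _ => ?_
      by_cases hi : i ∈ (Set.univ \ Set.Iio n) ∩ F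
      · rw [Set.indicator_of_mem hi, if_pos hi]
      · rw [Set.indicator_of_notMem hi, if_neg hi]
    rw [h5, ← ENNReal.ofReal_sum_of_nonneg (fun i _ => (hf i).le), ← hdEr] at h4
    have h6 : dr < ∑ i ∈ B, f i := by
      by_contra hcon
      push_neg at hcon
      exact absurd (ENNReal.ofReal_le_ofReal hcon) (not_le.2 h4)
    refine ⟨F, hF, B, ?_, ?_, h6⟩
    · intro x hx
      have := (Finset.mem_filter.1 (Finset.mem_coe.1 hx)).2
      exact this.2
    · intro i hi
      have := (Finset.mem_filter.1 hi).2.1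
      simpa using this.2
  -- The dichotomy
  by_cases hcase : ∀ k N : ℕ, ∃ F, F ∈ 𝓕 ∧ ∃ B : Finset ℕ, ↑B ⊆ F ∧ (∀ i ∈ B, N ≤ i) ∧
      dr ≤ ∑ i ∈ B, f i ∧ ∀ n, ((B.filter (· < n)).card + 1)^k ≤ max n (2^k)
  · exact C1 𝓕 f hf hEq dr hdr hcase
  push_neg at hcase
  obtain ⟨k₀, N₀, hthick⟩ := hcase
  -- `k₀` must be positive
  have hk₀ : 1 ≤ k₀ := by
    by_contra hcon
    push_neg at hcon
    have hk0 : k₀ = 0 := by omega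
    obtain ⟨F, hF, B, hBF, hBlo, hBmass⟩ := hAvail N₀
    obtain ⟨n, hn⟩ := hthick F hF B hBF hBlo hBmass.le
    rw [hk0, pow_zero, pow_zero] at hn
    have : 1 ≤ max n 1 := le_max_right _ _
    omega
  -- Extraction of light but thick pieces
  have hPIECE : ∀ m q0 : ℕ, ∃ (Q : Finset ℕ) (n : ℕ),
      (∀ i ∈ Q, q0 ≤ i) ∧ (∀ i ∈ Q, i < n) ∧ q0 + 2 ≤ n ∧
      (∑ i ∈ Q, f i ≤ dr * (2⁻¹:ℝ)^m) ∧ n ≤ Q.card ^ (4*k₀) := by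
    intro m q0
    have hlam : 0 < dr * (2⁻¹:ℝ)^m / 4 := by positivity
    obtain ⟨ub, hub⟩ := (heavy_finite 𝓕 f hf hEq (dr * (2⁻¹:ℝ)^m / 4) hlam).bddAbove
    obtain ⟨q, hq⟩ : ∃ q, q = q0 + N₀ + ub + (2*2^(m+3))^(2*k₀) + 2 := ⟨_, rfl⟩
    obtain ⟨F, hF, B₀, hB₀F, hB₀lo, hB₀mass⟩ := hAvail q
    have hlight : ∀ i ∈ B₀, f i ≤ dr * (2⁻¹:ℝ)^m / 4 := by
      intro i hi
      by_contra hge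
      push_neg at hge
      have h1 : i ∈ {j : ℕ | (∃ F ∈ 𝓕, j ∈ F) ∧ dr * (2⁻¹:ℝ)^m / 4 ≤ f j} :=
        ⟨⟨F, hF, hB₀F (Finset.mem_coe.2 hi)⟩, hge.le⟩
      have h2 := hub h1
      have h3 := hB₀lo i hi
      omega
    obtain ⟨B, hBB₀, hBm1, hBm2⟩ := trim_lemma f dr (dr * (2⁻¹:ℝ)^m / 4) (by positivity)
      B₀ (fun i _ => (hf i).le) hlight hB₀mass.le hdr
    have hBlo : ∀ i ∈ B, q ≤ i := fun i hi => hB₀lo i (hBB₀ hi)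
    have hBF : (↑B : Set ℕ) ⊆ F := fun x hx => hB₀F (Finset.coe_subset.2 hBB₀ hx)
    obtain ⟨n, hn⟩ := hthick F hF B hBF (fun i hi => by have := hBlo i hi; omega) hBm1
    obtain ⟨t, ht⟩ : ∃ t, t = (B.filter (· < n)).card := ⟨_, rfl⟩
    rw [← ht] at hn
    have hnlt : n < (t+1)^k₀ := lt_of_le_of_lt (le_max_left _ _) hn
    have h2k : 2^k₀ < (t+1)^k₀ := lt_of_le_of_lt (le_max_right _ _) hn
    have ht2 : 2 ≤ t := by
      by_contra hcon
      push_neg at hcon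
      have : (t+1)^k₀ ≤ 2^k₀ := Nat.pow_le_pow_left (by omega) _
      omega
    have hqn : q < n := by
      have hne : (B.filter (· < n)).Nonempty := by
        rw [← Finset.card_pos, ← ht]; omega
      obtain ⟨x, hx⟩ := hne
      have hx1 := (Finset.mem_filter.1 hx).2
      have hx2 := hBlo x (Finset.mem_filter.1 hx).1
      omega
    have hq2R : (2*2^(m+3))^(2*k₀) < n := by omega
    have htR : 2*2^(m+3) ≤ t := by
      by_contra hcon
      push_neg at hcon
      have h1 : (t+1)^k₀ ≤ (2*2^(m+3))^k₀ := Nat.pow_le_pow_left (by omega) _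
      have h2 : (2*2^(m+3))^k₀ ≤ (2*2^(m+3))^(2*k₀) :=
        Nat.pow_le_pow_right (by positivity) (by omega)
      omega
    obtain ⟨Bn, hBn⟩ : ∃ Bn, Bn = B.filter (· < n) := ⟨_, rfl⟩
    have htBn : Bn.card = t := by rw [hBn, ht]
    have htpos : (0:ℝ) < (t:ℝ) := by
      have : (0:ℕ) < t := by omega
      exact_mod_cast this
    have hmassBn : ∑ i ∈ Bn, f i ≤ 2*dr := by
      rw [hBn]
      have h1 : ∑ i ∈ B.filter (· < n), f i ≤ ∑ i ∈ B, f i :=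
        Finset.sum_le_sum_of_subset_of_nonneg (Finset.filter_subset _ _)
          (fun i _ _ => (hf i).le)
      have h3 : (2⁻¹:ℝ)^m ≤ 1 := pow_le_one₀ (by norm_num) (by norm_num)
      nlinarith
    have hmark := markov_lemma f Bn (4*dr/t) (fun i _ => (hf i).le)
    have hheavy : ((Bn.filter (fun i => 4*dr/t < f i)).card : ℝ) ≤ (t:ℝ)/2 := by
      have hle : ((Bn.filter (fun i => 4*dr/t < f i)).card : ℝ) * (4*dr/t) ≤ 2*dr :=
        le_trans hmark hmassBn
      obtain ⟨cR, hcR⟩ : ∃ cR, cR = ((Bn.filter (fun i => 4*dr/t < f i)).card : ℝ) := ⟨_, rfl⟩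
      rw [← hcR] at hle ⊢
      have hcRnn : 0 ≤ cR := by rw [hcR]; positivity
      rw [le_div_iff₀ (by norm_num : (0:ℝ) < 2)]
      have h1 : cR * (4*dr/t) * t = cR * (4*dr) := by field_simp
      have h2 := mul_le_mul_of_nonneg_right hle htpos.le
      rw [h1] at h2
      nlinarith [hdr]
    have hcardsplit := Finset.card_filter_add_card_filter_not
      (s := Bn) (p := fun i => 4*dr/t < f i)
    have hLight : (t:ℝ)/2 ≤ ((Bn.filter (fun i => ¬ (4*dr/t < f i))).card : ℝ) := by
      have h1 : (Bn.filter (fun i => 4*dr/t < f i)).card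
          + (Bn.filter (fun i => ¬ (4*dr/t < f i))).card = t := by rw [hcardsplit, htBn]
      have h2 : ((Bn.filter (fun i => 4*dr/t < f i)).card : ℝ)
          + ((Bn.filter (fun i => ¬ (4*dr/t < f i))).card : ℝ) = (t:ℝ) := by
        exact_mod_cast h1
      linarith
    have hRpos : (0:ℕ) < 2^(m+3) := Nat.pow_pos (by norm_num)
    have hcp2 : 2 ≤ t / 2^(m+3) := (Nat.le_div_iff_mul_le hRpos).2 (by omega)
    have hcpLight : t / 2^(m+3) ≤ (Bn.filter (fun i => ¬ (4*dr/t < f i))).card := by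
      have h1 : ((t / 2^(m+3) : ℕ):ℝ) ≤ (t:ℝ)/(2^(m+3):ℕ) := Nat.cast_div_le
      have h2 : (t:ℝ)/((2^(m+3):ℕ):ℝ) ≤ (t:ℝ)/2 := by
        apply div_le_div_of_nonneg_left htpos.le (by norm_num)
        have : (2:ℕ) ≤ 2^(m+3) := by
          calc (2:ℕ) = 2^1 := by norm_num
            _ ≤ 2^(m+3) := Nat.pow_le_pow_right (by norm_num) (by omega)
        exact_mod_cast this
      have h3 := le_trans h1 (le_trans h2 hLight)
      exact_mod_cast h3
    obtain ⟨Q, hQL, hQcard⟩ := Finset.exists_subset_card_eq hcpLight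
    have hQBn : ∀ i ∈ Q, i ∈ Bn := fun i hi => Finset.filter_subset _ _ (hQL hi)
    have hQB : ∀ i ∈ Q, i ∈ B := by
      intro i hi
      have h1 := hQBn i hi
      rw [hBn] at h1
      exact (Finset.mem_filter.1 h1).1
    refine ⟨Q, n, ?_, ?_, by omega, ?_, ?_⟩
    · intro i hi
      have := hBlo i (hQB i hi)
      omega
    · intro i hi
      have h1 := hQBn i hi
      rw [hBn] at h1
      exact (Finset.mem_filter.1 h1).2
    · -- mass bound
      have h1 : ∑ i ∈ Q, f i ≤ Q.card • (4*dr/t) := by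
        refine Finset.sum_le_card_nsmul _ _ _ fun x hx => ?_
        have h2 := (Finset.mem_filter.1 (hQL hx)).2
        push_neg at h2
        exact h2
      rw [nsmul_eq_mul, hQcard] at h1
      have h3 : ((t / 2^(m+3) : ℕ):ℝ) * (4*dr/t) ≤ dr * (2⁻¹:ℝ)^m := by
        have h4 : ((t / 2^(m+3) : ℕ):ℝ) ≤ (t:ℝ)/((2^(m+3):ℕ):ℝ) := Nat.cast_div_le
        have h5 : (0:ℝ) < 4*dr/t := by positivity
        have h6 : ((t / 2^(m+3) : ℕ):ℝ) * (4*dr/t) ≤ ((t:ℝ)/((2^(m+3):ℕ):ℝ)) * (4*dr/t) :=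
          mul_le_mul_of_nonneg_right h4 h5.le
        have h7 : ((t:ℝ)/((2^(m+3):ℕ):ℝ)) * (4*dr/t) = 4*dr/((2^(m+3):ℕ):ℝ) := by
          have hRne : ((2^(m+3):ℕ):ℝ) ≠ 0 := by positivity
          field_simp
        have h8 : (4:ℝ)*dr/((2^(m+3):ℕ):ℝ) ≤ dr * (2⁻¹:ℝ)^m := by
          have hcast : ((2^(m+3):ℕ):ℝ) = 2^(m+3) := by push_cast; ring
          rw [hcast]
          have h9 : (2:ℝ)^(m+3) = 2^m * 8 := by rw [pow_add]; norm_num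
          rw [h9]
          rw [div_le_iff₀ (by positivity)]
          have h10 : (2⁻¹:ℝ)^m * 2^m = 1 := by
            rw [← mul_pow]; norm_num
          have h11 : dr * (2⁻¹:ℝ)^m * (2^m * 8) = 8*dr := by
            calc dr * (2⁻¹:ℝ)^m * (2^m*8) = 8*dr*((2⁻¹:ℝ)^m * 2^m) := by ring
              _ = 8*dr := by rw [h10]; ring
          rw [h11]
          linarith
        linarith
      linarith
    · -- thickness
      obtain ⟨cp, hcp⟩ : ∃ cp, cp = t / 2^(m+3) := ⟨_, rfl⟩
      rw [← hcp] at hcp2 hQcard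
      have ha2 : t + 1 ≤ 2^(m+3) * (cp + 1) := by
        have := Nat.lt_mul_div_succ t hRpos
        rw [← hcp] at this
        omega
      have hb1 : n < (2^(m+3))^k₀ * (cp+1)^k₀ := by
        calc n < (t+1)^k₀ := hnlt
          _ ≤ (2^(m+3) * (cp+1))^k₀ := Nat.pow_le_pow_left ha2 _
          _ = (2^(m+3))^k₀ * (cp+1)^k₀ := mul_pow _ _ _
      have hb2 : ((2^(m+3):ℕ))^(2*k₀) ≤ n := by
        have h1 : ((2^(m+3):ℕ))^(2*k₀) ≤ (2*2^(m+3))^(2*k₀) :=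
          Nat.pow_le_pow_left (by omega) _
        omega
      have hb3 : n * n < ((2^(m+3))^(2*k₀) * ((cp+1)^k₀ * (cp+1)^k₀)) := by
        calc n * n < ((2^(m+3))^k₀ * (cp+1)^k₀) * ((2^(m+3))^k₀ * (cp+1)^k₀) :=
              Nat.mul_lt_mul_of_lt_of_le hb1 hb1.le (by positivity)
          _ = (2^(m+3))^(2*k₀) * ((cp+1)^k₀ * (cp+1)^k₀) := by
              rw [two_mul, pow_add]; ring
      have hb4 : n * n < n * ((cp+1)^k₀ * (cp+1)^k₀) := by
        calc n * n < (2^(m+3))^(2*k₀) * ((cp+1)^k₀ * (cp+1)^k₀) := hb3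
          _ ≤ n * ((cp+1)^k₀ * (cp+1)^k₀) := Nat.mul_le_mul_right _ hb2
      have hb5 : n < (cp+1)^k₀ * (cp+1)^k₀ := by
        have hnpos : 0 < n := by omega
        exact Nat.lt_of_mul_lt_mul_left (by omega : n * n < n * ((cp+1)^k₀ * (cp+1)^k₀))
      have hb6 : (cp+1)^k₀ * (cp+1)^k₀ ≤ cp^(4*k₀) := by
        have h1 : (cp+1)^k₀ * (cp+1)^k₀ = (cp+1)^(2*k₀) := by rw [two_mul, pow_add]
        have h2 : cp + 1 ≤ cp * cp := by nlinarith
        have h3 : (cp+1)^(2*k₀) ≤ (cp*cp)^(2*k₀) := Nat.pow_le_pow_left h2 _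
        have h4 : (cp*cp)^(2*k₀) = cp^(4*k₀) := by
          rw [← pow_two, ← pow_mul]; ring_nf
        omega
      rw [hQcard]
      omega
  -- Assemble the pieces into a single set
  choose Qf nf hQlo hQlt hQn2 hQmass hQthick using hPIECE
  obtain ⟨q, hq0, hqs⟩ : ∃ q : ℕ → ℕ, q 0 = 0 ∧ ∀ m, q (m+1) = nf m (q m) + q m :=
    ⟨fun m => Nat.rec 0 (fun m qm => nf m qm + qm) m, rfl, fun m => rfl⟩
  have hqmono : Monotone q := monotone_nat_of_le_succ (fun m => by rw [hqs]; omega)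
  have hqm : ∀ m, m ≤ q m := by
    intro m
    induction m with
    | zero => omega
    | succ j ih =>
      have := hQn2 j (q j)
      rw [hqs]
      omega
  set A : Set ℕ := ⋃ m, (↑(Qf m (q m)) : Set ℕ) with hA
  have hAnot : A ∉ expDensityZero := by
    refine not_mem_expDensityZero_of A (4*k₀) (by omega) fun M => ?_
    refine ⟨nf M (q M), ?_, ?_, ?_⟩
    · have h1 := hQn2 M (q M)
      have h2 := hqm M
      omega
    · have h1 := hQn2 M (q M)
      omega
    · have hsub : (↑(Qf M (q M)) : Set ℕ) ⊆ A ∩ Set.Iio (nf M (q M)) := by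
        intro x hx
        have hxQ : x ∈ Qf M (q M) := by exact_mod_cast hx
        exact ⟨Set.mem_iUnion.2 ⟨M, hx⟩, hQlt M (q M) x hxQ⟩
      have hcard : (Qf M (q M)).card ≤ (A ∩ Set.Iio (nf M (q M))).ncard := by
        rw [← Set.ncard_coe_finset]
        exact Set.ncard_le_ncard hsub (Set.Finite.inter_of_right (Set.finite_Iio _) _)
      calc nf M (q M) ≤ (Qf M (q M)).card ^ (4*k₀) := hQthick M (q M)
        _ ≤ (A ∩ Set.Iio (nf M (q M))).ncard ^ (4*k₀) := Nat.pow_le_pow_left hcard _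
  have hAexh : A ∈ Exh (fun A => ⨆ F ∈ 𝓕, muFF f F A) := by
    show Tendsto _ atTop (nhds 0)
    rw [ENNReal.tendsto_atTop_zero]
    intro ε hε
    have hgeo : Tendsto (fun m : ℕ => ENNReal.ofReal (4*dr * (2⁻¹:ℝ)^m)) atTop (nhds 0) := by
      have h1 : Tendsto (fun m : ℕ => 4*dr * (2⁻¹:ℝ)^m) atTop (nhds 0) := by
        have h2 : Tendsto (fun m : ℕ => (2⁻¹:ℝ)^m) atTop (nhds 0) :=
          tendsto_pow_atTop_nhds_zero_of_lt_one (by norm_num) (by norm_num)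
        have h3 := h2.const_mul (4*dr)
        simpa using h3
      have h4 := ENNReal.tendsto_ofReal (a := 0) h1
      simpa using h4
    obtain ⟨m, hm⟩ := (hgeo.eventually_lt_const hε).exists
    refine ⟨q m, fun n hn => ?_⟩
    have hcover : A \ Set.Iio (q m) ⊆ ⋃ j, (↑(Qf (j+m) (q (j+m))) : Set ℕ) := by
      rintro x ⟨hxA, hxge⟩
      obtain ⟨j', hj'⟩ := Set.mem_iUnion.1 hxA
      have hxQ : x ∈ Qf j' (q j') := by exact_mod_cast hj'
      simp only [Set.mem_Iio, not_lt] at hxge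
      have hjm : m ≤ j' := by
        by_contra hcon
        push_neg at hcon
        have h1 : x < nf j' (q j') := hQlt j' (q j') x hxQ
        have h2 : nf j' (q j') ≤ q (j'+1) := by rw [hqs]; omega
        have h3 : q (j'+1) ≤ q m := hqmono (by omega)
        omega
      refine Set.mem_iUnion.2 ⟨j' - m, ?_⟩
      have heq : j' - m + m = j' := by omega
      rw [heq]
      exact hj'
    have hb1 : (⨆ F ∈ 𝓕, muFF f F (A \ Set.Iio n)) ≤
        ⨆ F ∈ 𝓕, muFF f F (A \ Set.Iio (q m)) :=
      phi_mono 𝓕 f (Set.diff_subset_diff_right (Set.Iio_subset_Iio hn))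
    have hb2 := phi_le_tsum_of_cover 𝓕 f (fun i => (hf i).le) _
      (fun j => Qf (j+m) (q (j+m))) hcover
    have hb3 : ∑' j : ℕ, ENNReal.ofReal (∑ i ∈ Qf (j+m) (q (j+m)), f i)
        ≤ ∑' j : ℕ, ENNReal.ofReal (dr * (2⁻¹:ℝ)^m) * (ENNReal.ofReal 2⁻¹)^j := by
      refine ENNReal.tsum_le_tsum fun j => ?_
      have h1 := hQmass (j+m) (q (j+m))
      calc ENNReal.ofReal (∑ i ∈ Qf (j+m) (q (j+m)), f i)
          ≤ ENNReal.ofReal (dr * (2⁻¹:ℝ)^(j+m)) := ENNReal.ofReal_le_ofReal h1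
        _ = ENNReal.ofReal (dr * (2⁻¹:ℝ)^m) * (ENNReal.ofReal 2⁻¹)^j := by
            rw [← ENNReal.ofReal_pow (by norm_num), ← ENNReal.ofReal_mul (by positivity)]
            congr 1
            rw [pow_add]
            ring
    have hb4 : ∑' j : ℕ, ENNReal.ofReal (dr * (2⁻¹:ℝ)^m) * (ENNReal.ofReal 2⁻¹)^j
        = ENNReal.ofReal (dr * (2⁻¹:ℝ)^m) * 2 := by
      rw [ENNReal.tsum_mul_left]
      congr 1
      have h1 : ENNReal.ofReal (2⁻¹:ℝ) = 2⁻¹ := by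
        rw [ENNReal.ofReal_inv_of_pos (by norm_num)]
        norm_num
      rw [h1, ENNReal.tsum_geometric, ENNReal.one_sub_inv_two]
      simp
    have hb5 : ENNReal.ofReal (dr * (2⁻¹:ℝ)^m) * 2 ≤ ENNReal.ofReal (4*dr*(2⁻¹:ℝ)^m) := by
      have h1 : (2:ℝ≥0∞) = ENNReal.ofReal 2 := by norm_num
      rw [h1, ← ENNReal.ofReal_mul (by positivity)]
      refine ENNReal.ofReal_le_ofReal ?_
      have h2 : (0:ℝ) < (2⁻¹:ℝ)^m := by positivity
      nlinarith
    calc (⨆ F ∈ 𝓕, muFF f F (A \ Set.Iio n))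
        ≤ ⨆ F ∈ 𝓕, muFF f F (A \ Set.Iio (q m)) := hb1
      _ ≤ ∑' j : ℕ, ENNReal.ofReal (∑ i ∈ Qf (j+m) (q (j+m)), f i) := hb2
      _ ≤ ∑' j : ℕ, ENNReal.ofReal (dr * (2⁻¹:ℝ)^m) * (ENNReal.ofReal 2⁻¹)^j := hb3
      _ = ENNReal.ofReal (dr * (2⁻¹:ℝ)^m) * 2 := hb4
      _ ≤ ENNReal.ofReal (4*dr*(2⁻¹:ℝ)^m) := hb5
      _ ≤ ε := hm.le
  rw [← hEq] at hAexh
  exact hAnot hAexh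
end

section
/- There exists a pathological lower semicontinuous submeasure φ on ω such that P(φ) = ∞, Exh(φ) = Fin(φ) = Fin (the ideal of finite subsets of ω), and P(φ↾𝒫(A)) < ∞ for every A ∈ Fin(φ) (i.e., the degree of pathology of the restriction of φ to subsets of any set of finite φ-value is finite). -/
open Filter
open scoped ENNReal

namespace St14

def kk (t : ℕ) : ℕ := t + 2
def nn (t : ℕ) : ℕ := 2 * t + 4
def CC (t : ℕ) : Finset (Finset ℕ) := (Finset.range (nn t)).powersetCard (kk t)
def NN (t : ℕ) : ℕ := (CC t).card

lemma kk_le_nn (t : ℕ) : kk t ≤ nn t := by simp [kk, nn]; omega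

lemma NN_pos (t : ℕ) : 0 < NN t :=
  Finset.card_pos.2 (Finset.powersetCard_nonempty.2 (by simpa using kk_le_nn t))

noncomputable def codeAux (t i : ℕ) : Finset ℕ :=
  if h : i < NN t then (((CC t).equivFin.symm ⟨i, h⟩ : {s // s ∈ CC t}) : Finset ℕ) else ∅

noncomputable def code (x : ℕ) : Finset ℕ := codeAux (Nat.unpair x).1 (Nat.unpair x).2

lemma codeAux_mem {t i : ℕ} (h : i < NN t) : codeAux t i ∈ CC t := by
  rw [codeAux, dif_pos h]; exact ((CC t).equivFin.symm ⟨i, h⟩).2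

def Blk (t : ℕ) : Set ℕ := {x | (Nat.unpair x).1 = t ∧ (Nat.unpair x).2 < NN t}
def Fr : Set ℕ := {x | ¬ (Nat.unpair x).2 < NN (Nat.unpair x).1}

lemma code_mem {t x : ℕ} (hx : x ∈ Blk t) : code x ∈ CC t := by
  obtain ⟨h1, h2⟩ := hx
  rw [code, h1]
  exact codeAux_mem h2

lemma code_subset {t x : ℕ} (hx : x ∈ Blk t) : code x ⊆ Finset.range (nn t) :=
  (Finset.mem_powersetCard.1 (code_mem hx)).1

lemma code_card {t x : ℕ} (hx : x ∈ Blk t) : (code x).card = kk t :=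
  (Finset.mem_powersetCard.1 (code_mem hx)).2

lemma code_nonempty {t x : ℕ} (hx : x ∈ Blk t) : (code x).Nonempty := by
  rw [← Finset.card_pos, code_card hx, kk]; omega

lemma code_surj {t : ℕ} {s : Finset ℕ} (hs : s ∈ CC t) : ∃ x ∈ Blk t, code x = s := by
  set i : Fin (NN t) := (CC t).equivFin ⟨s, hs⟩ with hi
  refine ⟨Nat.pair t i.1, ⟨by simp [Nat.unpair_pair], by simp [Nat.unpair_pair, i.2]⟩, ?_⟩
  rw [code, Nat.unpair_pair]
  simp only [codeAux, i.2, dif_pos]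
  exact congrArg Subtype.val ((CC t).equivFin.symm_apply_apply ⟨s, hs⟩)

lemma Blk_finite (t : ℕ) : (Blk t).Finite := by
  apply Set.Finite.subset ((Set.finite_Iio (NN t)).image (Nat.pair t))
  intro x ⟨h1, h2⟩
  exact ⟨(Nat.unpair x).2, h2, by rw [← h1]; exact Nat.pair_unpair x⟩

lemma Blk_disj {s t : ℕ} (h : s ≠ t) : Blk s ∩ Blk t = ∅ := by
  ext x; simp only [Set.mem_inter_iff, Set.mem_empty_iff_false, iff_false]
  rintro ⟨⟨h1, _⟩, ⟨h2, _⟩⟩; exact h (h1 ▸ h2)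

lemma Blk_Fr_disj (t : ℕ) : Blk t ∩ Fr = ∅ := by
  ext x; simp only [Set.mem_inter_iff, Set.mem_empty_iff_false, iff_false]
  rintro ⟨⟨h1, h2⟩, h3⟩; exact h3 (h1 ▸ h2)

lemma mem_Blk_or_Fr (x : ℕ) : x ∈ Blk ((Nat.unpair x).1) ∨ x ∈ Fr := by
  by_cases h : (Nat.unpair x).2 < NN (Nat.unpair x).1
  · exact Or.inl ⟨rfl, h⟩
  · exact Or.inr h

lemma t_le_of_mem_Blk {t x : ℕ} (hx : x ∈ Blk t) : t ≤ x := hx.1 ▸ Nat.unpair_left_le x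


def Covers (J : Finset ℕ) (A : Set ℕ) : Prop := ∀ x ∈ A, (code x ∩ J).Nonempty

noncomputable def tau (A : Set ℕ) : ℕ := sInf {m | ∃ J : Finset ℕ, J.card ≤ m ∧ Covers J A}

lemma tau_empty : tau ∅ = 0 :=
  Nat.sInf_eq_zero.2 (Or.inl ⟨∅, le_rfl, fun x hx => absurd hx (Set.notMem_empty x)⟩)

lemma covers_range {t : ℕ} {A : Set ℕ} (hA : A ⊆ Blk t) : Covers (Finset.range (nn t)) A :=
  fun x hx => by
    rw [Finset.inter_eq_left.2 (code_subset (hA hx))]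
    exact code_nonempty (hA hx)

lemma tau_set_nonempty {t : ℕ} {A : Set ℕ} (hA : A ⊆ Blk t) :
    {m | ∃ J : Finset ℕ, J.card ≤ m ∧ Covers J A}.Nonempty :=
  ⟨nn t, Finset.range (nn t), by simp, covers_range hA⟩

lemma tau_le_card {A : Set ℕ} {J : Finset ℕ} (h : Covers J A) : tau A ≤ J.card :=
  Nat.sInf_le ⟨J, le_rfl, h⟩

lemma tau_spec {t : ℕ} {A : Set ℕ} (hA : A ⊆ Blk t) :
    ∃ J : Finset ℕ, J.card ≤ tau A ∧ Covers J A :=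
  Nat.sInf_mem (tau_set_nonempty hA)

attribute [irreducible] tau code

lemma tau_mono' {t : ℕ} {A B : Set ℕ} (hAB : A ⊆ B) (hB : B ⊆ Blk t) : tau A ≤ tau B := by
  obtain ⟨J, hJ, hc⟩ := tau_spec hB
  exact le_trans (tau_le_card (fun x hx => hc x (hAB hx))) hJ

lemma tau_union {t : ℕ} {A B : Set ℕ} (hA : A ⊆ Blk t) (hB : B ⊆ Blk t) :
    tau (A ∪ B) ≤ tau A + tau B := by
  obtain ⟨J1, hJ1, hc1⟩ := tau_spec hA
  obtain ⟨J2, hJ2, hc2⟩ := tau_spec hB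
  have hcov : Covers (J1 ∪ J2) (A ∪ B) := by
    rintro x (hx | hx)
    · exact (hc1 x hx).mono (Finset.inter_subset_inter (Finset.Subset.refl _) Finset.subset_union_left)
    · exact (hc2 x hx).mono (Finset.inter_subset_inter (Finset.Subset.refl _) Finset.subset_union_right)
  refine le_trans (tau_le_card hcov) ?_
  calc (J1 ∪ J2).card ≤ J1.card + J2.card := Finset.card_union_le _ _
    _ ≤ tau A + tau B := Nat.add_le_add hJ1 hJ2

lemma tau_le_nn {t : ℕ} {A : Set ℕ} (hA : A ⊆ Blk t) : tau A ≤ nn t := by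
  simpa using tau_le_card (covers_range hA)

lemma one_le_tau {t : ℕ} {A : Set ℕ} (hA : A ⊆ Blk t) (hne : A.Nonempty) : 1 ≤ tau A := by
  by_contra h
  push_neg at h
  interval_cases h' : tau A
  · obtain ⟨J, hJ, hc⟩ := tau_spec hA
    rw [h'] at hJ
    obtain ⟨x, hx⟩ := hne
    obtain ⟨j, hj⟩ := hc x hx
    rw [Finset.card_eq_zero.1 (Nat.le_zero.1 hJ)] at hj
    simp at hj

lemma tau_Sj_le_one {t j : ℕ} : tau {x ∈ Blk t | j ∈ code x} ≤ 1 := by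
  refine le_trans (tau_le_card (J := {j}) ?_) (by simp)
  rintro x ⟨_, hj⟩
  exact ⟨j, Finset.mem_inter.2 ⟨hj, Finset.mem_singleton_self j⟩⟩

lemma kk_lt_tau_Blk (t : ℕ) : kk t < tau (Blk t) := by
  by_contra h
  push_neg at h
  obtain ⟨J, hJ, hc⟩ := tau_spec (le_refl (Blk t))
  have hJk : J.card ≤ kk t := le_trans hJ h
  -- the complement of J in range nn t has ≥ kk t elements, pick a kk t subset
  have hcard : kk t ≤ (Finset.range (nn t) \ J).card := by
    have h1 := Finset.le_card_sdiff J (Finset.range (nn t))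
    rw [Finset.card_range] at h1
    simp only [kk, nn] at hJk h1 ⊢
    omega
  obtain ⟨s, hs, hscard⟩ := Finset.exists_subset_card_eq hcard
  have hsC : s ∈ CC t := Finset.mem_powersetCard.2 ⟨hs.trans (Finset.sdiff_subset), hscard⟩
  obtain ⟨x, hx, hcode⟩ := code_surj hsC
  obtain ⟨j, hj⟩ := hc x hx
  rw [Finset.mem_inter, hcode] at hj
  exact (Finset.mem_sdiff.1 (hs hj.1)).2 hj.2

noncomputable def ee (A : Set ℕ) : ℝ≥0∞ := (A.encard : ℝ≥0∞)

lemma ee_empty : ee ∅ = 0 := by simp [ee]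
lemma ee_mono {A B : Set ℕ} (h : A ⊆ B) : ee A ≤ ee B :=
  ENat.toENNReal_le.2 (Set.encard_le_encard h)
lemma ee_union {A B : Set ℕ} : ee (A ∪ B) ≤ ee A + ee B := by
  rw [ee, ee, ee, ← ENat.toENNReal_add]
  exact ENat.toENNReal_le.2 (Set.encard_union_le A B)
lemma ee_top {A : Set ℕ} (h : A.Infinite) : ee A = ⊤ := by
  rw [ee, Set.encard_eq_top_iff.2 h, ENat.toENNReal_top]
lemma ee_lt_top {A : Set ℕ} (h : A.Finite) : ee A < ⊤ := by
  rw [ee, h.encard_eq_coe_toFinset_card]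
  simp
lemma one_le_ee {A : Set ℕ} (h : A.Nonempty) : 1 ≤ ee A := by
  obtain ⟨x, hx⟩ := h
  calc (1:ℝ≥0∞) = ee {x} := by simp [ee]
    _ ≤ ee A := ee_mono (by simpa using hx)

noncomputable def phi (A : Set ℕ) : ℝ≥0∞ :=
  (∑' t, (tau (A ∩ Blk t) : ℝ≥0∞)) + ee (A ∩ Fr)

lemma phi_empty : phi ∅ = 0 := by
  simp [phi, tau_empty, ee_empty]

lemma phi_mono {A B : Set ℕ} (h : A ⊆ B) : phi A ≤ phi B := by
  refine add_le_add (ENNReal.tsum_le_tsum fun t => ?_) (ee_mono (Set.inter_subset_inter_left _ h))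
  exact_mod_cast tau_mono' (Set.inter_subset_inter_left _ h) Set.inter_subset_right

lemma phi_subadd (A B : Set ℕ) : phi (A ∪ B) ≤ phi A + phi B := by
  have h1 : ∀ t, (tau ((A ∪ B) ∩ Blk t) : ℝ≥0∞) ≤ tau (A ∩ Blk t) + tau (B ∩ Blk t) := by
    intro t
    rw [Set.union_inter_distrib_right]
    exact_mod_cast tau_union Set.inter_subset_right Set.inter_subset_right
  calc phi (A ∪ B) ≤ (∑' t, ((tau (A ∩ Blk t) : ℝ≥0∞) + tau (B ∩ Blk t))) + (ee (A ∩ Fr) + ee (B ∩ Fr)) := by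
        refine add_le_add (ENNReal.tsum_le_tsum h1) ?_
        rw [Set.union_inter_distrib_right]
        exact ee_union
    _ = phi A + phi B := by
        rw [ENNReal.tsum_add, phi, phi]; ring

lemma phi_restrict {t : ℕ} {A : Set ℕ} (hA : A ⊆ Blk t) : phi A = tau A := by
  have h1 : ∀ s, s ≠ t → (tau (A ∩ Blk s) : ℝ≥0∞) = 0 := by
    intro s hs
    have : A ∩ Blk s = ∅ := by
      apply Set.eq_empty_of_subset_empty
      rw [← Blk_disj hs.symm]  -- Blk t ∩ Blk s
      exact fun x hx => ⟨hA hx.1, hx.2⟩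
    rw [this, tau_empty, Nat.cast_zero]
  have h2 : A ∩ Fr = ∅ := by
    apply Set.eq_empty_of_subset_empty
    rw [← Blk_Fr_disj t]
    exact fun x hx => ⟨hA hx.1, hx.2⟩
  rw [phi, h2, ee_empty, add_zero, tsum_eq_single t h1, Set.inter_eq_left.2 hA]

lemma one_le_phi {A : Set ℕ} (h : A.Nonempty) : 1 ≤ phi A := by
  obtain ⟨x, hx⟩ := h
  rcases mem_Blk_or_Fr x with hb | hf
  · have : (1:ℝ≥0∞) ≤ phi {x} := by
      rw [phi_restrict (Set.singleton_subset_iff.2 hb)]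
      exact_mod_cast one_le_tau (Set.singleton_subset_iff.2 hb) ⟨x, rfl⟩
    exact this.trans (phi_mono (Set.singleton_subset_iff.2 hx))
  · calc (1:ℝ≥0∞) ≤ ee ({x} ∩ Fr) := one_le_ee ⟨x, rfl, hf⟩
      _ ≤ phi {x} := le_add_self
      _ ≤ phi A := phi_mono (Set.singleton_subset_iff.2 hx)

lemma eq_top_of_nat_le {x : ℝ≥0∞} (h : ∀ n : ℕ, (n : ℝ≥0∞) ≤ x) : x = ⊤ :=
  top_unique (ENNReal.iSup_natCast ▸ iSup_le h)

lemma phi_lt_top {A : Set ℕ} (h : A.Finite) : phi A < ⊤ := by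
  obtain ⟨b, hb⟩ := h.bddAbove
  have hzero : ∀ t ∉ Finset.range (b + 1), (tau (A ∩ Blk t) : ℝ≥0∞) = 0 := by
    intro t ht
    rw [Finset.mem_range, not_lt] at ht
    have : A ∩ Blk t = ∅ := by
      apply Set.eq_empty_iff_forall_notMem.2
      rintro x ⟨hxA, hxB⟩
      have := t_le_of_mem_Blk hxB
      have := hb hxA
      omega
    rw [this, tau_empty, Nat.cast_zero]
  rw [phi, tsum_eq_sum hzero]
  refine ENNReal.add_lt_top.2 ⟨?_, ee_lt_top (h.subset Set.inter_subset_left)⟩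
  refine ENNReal.sum_lt_top.2 fun t _ => ?_
  exact lt_of_le_of_lt (Nat.cast_le.2 (tau_le_nn Set.inter_subset_right)) (ENNReal.natCast_lt_top _)

lemma phi_top {A : Set ℕ} (h : A.Infinite) : phi A = ⊤ := by
  by_cases hF : (A ∩ Fr).Infinite
  · rw [phi, ee_top hF, add_top]
  · rw [Set.not_infinite] at hF
    have hAF : (A \ Fr).Infinite := by
      have h1 := h.diff hF
      rwa [Set.diff_self_inter] at h1
    have hT : {t | (A ∩ Blk t).Nonempty}.Infinite := by
      by_contra hTf
      rw [Set.not_infinite] at hTf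
      apply hAF
      refine Set.Finite.subset (hTf.biUnion (fun t _ => ((Blk_finite t).subset (Set.inter_subset_right : A ∩ Blk t ⊆ Blk t) : (A ∩ Blk t).Finite))) ?_
      intro x hx
      rcases mem_Blk_or_Fr x with hbl | hfr
      · exact Set.mem_biUnion (⟨x, hx.1, hbl⟩ : (A ∩ Blk _).Nonempty) ⟨hx.1, hbl⟩

      · exact absurd hfr hx.2
    have hS1 : (∑' t, (tau (A ∩ Blk t) : ℝ≥0∞)) = ⊤ := by
      apply eq_top_of_nat_le
      intro m
      obtain ⟨T', hT'sub, hT'card⟩ := hT.exists_subset_card_eq m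
      calc (m : ℝ≥0∞) = ∑ _t ∈ T', (1:ℝ≥0∞) := by rw [Finset.sum_const, hT'card]; simp
        _ ≤ ∑ t ∈ T', (tau (A ∩ Blk t) : ℝ≥0∞) := by
            refine Finset.sum_le_sum fun t ht => ?_
            have hne : (A ∩ Blk t).Nonempty := hT'sub ht
            exact_mod_cast one_le_tau Set.inter_subset_right hne
        _ ≤ ∑' t, (tau (A ∩ Blk t) : ℝ≥0∞) := ENNReal.sum_le_tsum T'
    rw [phi, hS1, top_add]

lemma ee_sup' (A : Set ℕ) : ee A = ⨆ G : {G : Finset ℕ // ↑G ⊆ A}, ee ↑G.val := by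
  refine le_antisymm ?_ (iSup_le fun G => ee_mono G.2)
  rcases A.finite_or_infinite with hf | hi
  · exact le_iSup_of_le ⟨hf.toFinset, by simp⟩ (by rw [hf.coe_toFinset])
  · rw [ee_top hi]
    have h : ∀ m : ℕ, (m : ℝ≥0∞) ≤ ⨆ G : {G : Finset ℕ // ↑G ⊆ A}, ee ↑G.val := by
      intro m
      obtain ⟨G, hG, hcard⟩ := hi.exists_subset_card_eq m
      refine le_iSup_of_le ⟨G, hG⟩ ?_
      rw [ee, Set.encard_coe_eq_coe_finsetCard, hcard]
      simp
    exact le_of_eq (eq_top_of_nat_le h).symm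

lemma phi_lsc_le (A : Set ℕ) :
    phi A ≤ ⨆ (F : Set ℕ) (_ : F ⊆ A ∧ F.Finite), phi F := by
  have key : ∀ (n : ℕ) (G : {G : Finset ℕ // ↑G ⊆ A ∩ Fr}),
      (∑ t ∈ Finset.range n, (tau (A ∩ Blk t) : ℝ≥0∞)) + ee ↑G.val
        ≤ ⨆ (F : Set ℕ) (_ : F ⊆ A ∧ F.Finite), phi F := by
    intro n G
    set F' : Set ℕ := (A ∩ ⋃ t ∈ Finset.range n, Blk t) ∪ ↑G.val with hF'
    have hF'A : F' ⊆ A := by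
      rintro x (hx | hx)
      · exact hx.1
      · exact (G.2 hx).1
    have hF'fin : F'.Finite := by
      refine Set.Finite.union (Set.Finite.subset ?_ Set.inter_subset_right) (G.val.finite_toSet)
      exact Set.Finite.biUnion (Finset.range n).finite_toSet (fun t _ => Blk_finite t)
    have hblk : ∀ t ∈ Finset.range n, F' ∩ Blk t = A ∩ Blk t := by
      intro t ht
      apply Set.Subset.antisymm
      · rintro x ⟨hxF, hb⟩
        rcases hxF with hx | hx
        · exact ⟨hx.1, hb⟩
        · have hmem : x ∈ Blk t ∩ Fr := ⟨hb, (G.2 hx).2⟩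
          rw [Blk_Fr_disj t] at hmem
          exact hmem.elim
      · rintro x ⟨hxA, hb⟩
        exact ⟨Or.inl ⟨hxA, Set.mem_biUnion ht hb⟩, hb⟩
    have h1 : (∑ t ∈ Finset.range n, (tau (A ∩ Blk t) : ℝ≥0∞)) + ee ↑G.val ≤ phi F' := by
      rw [phi]
      refine add_le_add ?_ (ee_mono ?_)
      · refine le_trans (le_of_eq (Finset.sum_congr rfl fun t ht => by rw [← hblk t ht])) ?_
        exact ENNReal.sum_le_tsum _
      · exact Set.subset_inter (fun x hx => Set.mem_union_right _ hx) (fun x hx => (G.2 hx).2)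
    exact h1.trans (le_iSup₂_of_le F' ⟨hF'A, hF'fin⟩ le_rfl)
  have : Nonempty {G : Finset ℕ // ↑G ⊆ A ∩ Fr} := ⟨⟨∅, by simp⟩⟩
  rw [phi, ENNReal.tsum_eq_iSup_nat, ee_sup' (A ∩ Fr), ENNReal.iSup_add]
  refine iSup_le fun n => ?_
  rw [ENNReal.add_iSup]
  exact iSup_le fun G => key n G

lemma phi_lsc : IsLSC phi := by
  intro A
  refine le_antisymm (phi_lsc_le A) ?_
  exact iSup₂_le fun F hF => phi_mono hF.1

lemma mu_finset_sum {μ : Set ℕ → ℝ≥0∞} (hμ : IsFAMeasure μ) (s : Finset ℕ) :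
    μ ↑s = ∑ x ∈ s, μ {x} := by
  induction s using Finset.induction with
  | empty => simpa using hμ.1
  | insert a s ha ih =>
    rw [Finset.coe_insert, Set.insert_eq,
      hμ.2 _ _ (Set.disjoint_singleton_left.2 (by simpa using ha)), ih, Finset.sum_insert ha]

noncomputable def blkF (t : ℕ) : Finset ℕ := (Finset.range (NN t)).image (Nat.pair t)

lemma coe_blkF (t : ℕ) : (blkF t : Set ℕ) = Blk t := by
  ext x
  simp only [blkF, Finset.coe_image, Finset.coe_range, Set.mem_image, Set.mem_Iio]
  constructor
  · rintro ⟨i, hi, rfl⟩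
    exact ⟨by simp [Nat.unpair_pair], by simp [Nat.unpair_pair, hi]⟩
  · rintro ⟨h1, h2⟩
    exact ⟨(Nat.unpair x).2, h2, by rw [← h1]; exact Nat.pair_unpair x⟩

lemma mu_Blk_le_two {μ : Set ℕ → ℝ≥0∞} (hμ : IsFAMeasure μ) (hle : ∀ B, μ B ≤ phi B) (t : ℕ) :
    μ (Blk t) ≤ 2 := by
  have hmem : ∀ x ∈ blkF t, x ∈ Blk t := fun x hx => (coe_blkF t) ▸ hx
  have key : (kk t : ℝ≥0∞) * μ (Blk t)
      = ∑ j ∈ Finset.range (nn t), μ ↑((blkF t).filter (fun x => j ∈ code x)) := by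
    calc (kk t : ℝ≥0∞) * μ (Blk t) = (kk t : ℝ≥0∞) * ∑ x ∈ blkF t, μ {x} := by
          rw [← coe_blkF t, mu_finset_sum hμ]
      _ = ∑ x ∈ blkF t, ∑ j ∈ code x, μ {x} := by
          rw [Finset.mul_sum]
          refine Finset.sum_congr rfl fun x hx => ?_
          rw [Finset.sum_const, code_card (hmem x hx), nsmul_eq_mul]
      _ = ∑ x ∈ blkF t, ∑ j ∈ Finset.range (nn t), if j ∈ code x then μ {x} else 0 := by
          refine Finset.sum_congr rfl fun x hx => ?_
          rw [Finset.sum_ite_mem, Finset.inter_eq_right.2 (code_subset (hmem x hx))]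
      _ = ∑ j ∈ Finset.range (nn t), ∑ x ∈ blkF t, if j ∈ code x then μ {x} else 0 :=
          Finset.sum_comm
      _ = ∑ j ∈ Finset.range (nn t), ∑ x ∈ (blkF t).filter (fun x => j ∈ code x), μ {x} := by
          refine Finset.sum_congr rfl fun j _ => ?_
          rw [Finset.sum_filter]
      _ = ∑ j ∈ Finset.range (nn t), μ ↑((blkF t).filter (fun x => j ∈ code x)) := by
          refine Finset.sum_congr rfl fun j _ => ?_
          rw [mu_finset_sum hμ]
  have hterm : ∀ j ∈ Finset.range (nn t), μ ↑((blkF t).filter (fun x => j ∈ code x)) ≤ 1 := by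
    intro j _
    have hsub : (↑((blkF t).filter (fun x => j ∈ code x)) : Set ℕ) ⊆ {x ∈ Blk t | j ∈ code x} := by
      intro x hx
      rw [Finset.coe_filter] at hx
      exact ⟨hmem x hx.1, hx.2⟩
    have hsub2 : (↑((blkF t).filter (fun x => j ∈ code x)) : Set ℕ) ⊆ Blk t :=
      fun x hx => (hsub hx).1
    calc μ _ ≤ phi _ := hle _
      _ = (tau ↑((blkF t).filter (fun x => j ∈ code x)) : ℝ≥0∞) := phi_restrict hsub2
      _ ≤ 1 := by
          have h1 := tau_mono' hsub (fun x hx => hx.1)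
          have h2 := tau_Sj_le_one (t := t) (j := j)
          exact_mod_cast le_trans h1 h2
  have hle2 : (kk t : ℝ≥0∞) * μ (Blk t) ≤ (kk t : ℝ≥0∞) * 2 := by
    rw [key]
    calc ∑ j ∈ Finset.range (nn t), μ ↑((blkF t).filter (fun x => j ∈ code x))
        ≤ ∑ _j ∈ Finset.range (nn t), (1:ℝ≥0∞) := Finset.sum_le_sum hterm
      _ = (nn t : ℝ≥0∞) := by simp
      _ = (kk t : ℝ≥0∞) * 2 := by
          rw [show nn t = kk t * 2 by simp [kk, nn]; omega]
          push_cast; ring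
  have hk0 : (kk t : ℝ≥0∞) ≠ 0 := by
    simp only [ne_eq, Nat.cast_eq_zero, kk]
    omega
  exact (ENNReal.mul_le_mul_iff_right hk0 (ENNReal.natCast_ne_top _)).1 hle2

lemma hat_Blk_le_two (t : ℕ) : hat phi (Blk t) ≤ 2 :=
  iSup_le fun μ => iSup_le fun hμ => mu_Blk_le_two hμ.1 hμ.2 t

lemma phi_Blk_lower (t : ℕ) : (kk t : ℝ≥0∞) + 1 ≤ phi (Blk t) := by
  rw [phi_restrict (le_refl (Blk t))]
  exact_mod_cast kk_lt_tau_Blk t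

lemma phi_Blk_ne_top (t : ℕ) : phi (Blk t) ≠ ⊤ := by
  rw [phi_restrict (le_refl (Blk t))]
  exact ENNReal.natCast_ne_top _

lemma phi_Blk_ne_zero (t : ℕ) : phi (Blk t) ≠ 0 := by
  intro h
  have := phi_Blk_lower t
  rw [h] at this
  simp at this

lemma pratio_Blk (t : ℕ) : (kk t : ℝ≥0∞) / 2 ≤ pratio (phi (Blk t)) (hat phi (Blk t)) := by
  rw [pratio, if_neg (by push_neg; exact ⟨fun h => absurd h (phi_Blk_ne_zero t), fun h => absurd h (phi_Blk_ne_top t)⟩)]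
  calc (kk t : ℝ≥0∞) / 2 ≤ phi (Blk t) / 2 :=
        ENNReal.div_le_div_right (le_trans (by simp) (phi_Blk_lower t)) 2
    _ ≤ phi (Blk t) / hat phi (Blk t) := ENNReal.div_le_div_left (hat_Blk_le_two t) _

lemma degP_phi_top : degP phi = ⊤ := by
  apply eq_top_of_nat_le
  intro m
  calc (m : ℝ≥0∞) ≤ (kk (2 * m) : ℝ≥0∞) / 2 := by
        rw [ENNReal.le_div_iff_mul_le (Or.inl two_ne_zero) (Or.inl ENNReal.ofNat_ne_top)]
        rw [show ((kk (2*m) : ℝ≥0∞)) = ((2*m+2 : ℕ) : ℝ≥0∞) by norm_cast]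
        calc (m : ℝ≥0∞) * 2 = ((m * 2 : ℕ) : ℝ≥0∞) := by push_cast; ring
          _ ≤ ((2*m+2 : ℕ) : ℝ≥0∞) := by exact_mod_cast (by omega : m * 2 ≤ 2*m+2)
    _ ≤ pratio (phi (Blk (2*m))) (hat phi (Blk (2*m))) := pratio_Blk (2*m)
    _ ≤ degP phi := le_iSup (fun A => pratio (phi A) (hat phi A)) (Blk (2*m))

lemma hat_ne_phi : (fun A => hat phi A) ≠ phi := by
  intro h
  have h0 : hat phi (Blk 0) = phi (Blk 0) := congrFun h (Blk 0)
  have h1 : (2 : ℝ≥0∞) + 1 ≤ phi (Blk 0) := by simpa [kk] using phi_Blk_lower 0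
  have h2 := hat_Blk_le_two 0
  rw [h0] at h2
  have := le_trans h1 h2
  norm_num at this

lemma fin_phi : {A : Set ℕ | phi A < ⊤} = {A : Set ℕ | A.Finite} := by
  ext A
  simp only [Set.mem_setOf_eq]
  constructor
  · intro h
    by_contra hinf
    rw [phi_top hinf] at h
    exact absurd h (lt_irrefl ⊤)
  · exact phi_lt_top

lemma exh_phi : Exh phi = {A : Set ℕ | A.Finite} := by
  ext A
  simp only [Exh, Set.mem_setOf_eq]
  constructor
  · intro h
    by_contra hinf
    have heq : (fun n => phi (A \ Set.Iio n)) = fun _ => (⊤ : ℝ≥0∞) := by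
      funext n
      exact phi_top ((Set.Infinite.diff hinf (Set.finite_Iio n)))
    rw [heq] at h
    have := tendsto_nhds_unique h tendsto_const_nhds
    simp at this
  · intro hfin
    obtain ⟨b, hb⟩ := hfin.bddAbove
    refine Tendsto.congr' ?_ (tendsto_const_nhds : Tendsto (fun _ : ℕ => (0:ℝ≥0∞)) atTop (nhds 0))
    rw [Filter.EventuallyEq, eventually_atTop]
    refine ⟨b + 1, fun n hn => ?_⟩
    have : A \ Set.Iio n = ∅ := by
      apply Set.eq_empty_iff_forall_notMem.2
      rintro x ⟨hxA, hxI⟩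
      exact hxI (lt_of_le_of_lt (hb hxA) (by omega))
    rw [this, phi_empty]

lemma restrict_degP {A : Set ℕ} (h : phi A < ⊤) :
    degP (fun S : Set ↥A => phi (Subtype.val '' S)) < ⊤ := by
  classical
  set ψ : Set ↥A → ℝ≥0∞ := fun S => phi (Subtype.val '' S) with hψ
  have hbound : ∀ S : Set ↥A, pratio (ψ S) (hat ψ S) ≤ 1 ⊔ phi A := by
    intro S
    rcases S.eq_empty_or_nonempty with rfl | ⟨x₀, hx₀⟩
    · have h1 : ψ ∅ = 0 := by simp [hψ, phi_empty]
      have h2 : hat ψ ∅ = 0 := by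
        refine le_antisymm (iSup_le fun μ => iSup_le fun hμ => le_of_eq hμ.1.1) (zero_le)
      rw [h1, h2, pratio, if_pos (Or.inl ⟨rfl, rfl⟩)]
      exact le_max_left _ _
    · have hSne : (Subtype.val '' S).Nonempty := ⟨x₀.val, x₀, hx₀, rfl⟩
      have ha1 : 1 ≤ ψ S := one_le_phi hSne
      have haA : ψ S ≤ phi A := phi_mono (Subtype.coe_image_subset A S)
      have hatop : ψ S ≠ ⊤ := (lt_of_le_of_lt haA h).ne
      have hb1 : 1 ≤ hat ψ S := by
        set μ : Set ↥A → ℝ≥0∞ := fun T => if x₀ ∈ T then 1 else 0 with hμdef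
        have hFA : IsFAMeasure μ := by
          constructor
          · simp [hμdef]
          · intro T U hdis
            by_cases hT : x₀ ∈ T <;> by_cases hU : x₀ ∈ U
            · exact absurd hU (Set.disjoint_left.1 hdis hT)
            · simp [hμdef, hT, hU]
            · simp [hμdef, hT, hU]
            · simp [hμdef, hT, hU]
        have hleψ : ∀ B, μ B ≤ ψ B := by
          intro B
          by_cases hB : x₀ ∈ B
          · simp only [hμdef, if_pos hB]
            exact one_le_phi ⟨x₀.val, x₀, hB, rfl⟩
          · simp [hμdef, if_neg hB]
        calc (1:ℝ≥0∞) = μ S := by simp [hμdef, hx₀]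
          _ ≤ hat ψ S := le_iSup₂_of_le μ ⟨hFA, hleψ⟩ le_rfl
      have hcond : ¬((ψ S = 0 ∧ hat ψ S = 0) ∨ (ψ S = ⊤ ∧ hat ψ S = ⊤)) := by
        push_neg
        exact ⟨fun h0 => absurd (h0 ▸ ha1) (by simp [h0]), fun htop => absurd htop hatop⟩
      rw [pratio, if_neg hcond]
      calc ψ S / hat ψ S ≤ ψ S / 1 := ENNReal.div_le_div_left hb1 _
        _ = ψ S := by simp
        _ ≤ 1 ⊔ phi A := le_max_of_le_right haA
  calc degP ψ ≤ 1 ⊔ phi A := iSup_le hbound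
    _ < ⊤ := max_lt (by norm_num) h

end St14

/-- There is a pathological lsc submeasure `φ` on `ω` with `P φ = ∞`,
`Exh φ = Fin φ = Fin`, and `P (φ ↾ 𝒫(A)) < ∞` for every `A ∈ Fin φ`. -/
theorem stmt14 :
    ∃ φ : Set ℕ → ℝ≥0∞, IsSubmeasure φ ∧ IsLSC φ ∧ (fun A => hat φ A) ≠ φ ∧
      degP φ = ⊤ ∧
      Exh φ = {A : Set ℕ | A.Finite} ∧
      {A : Set ℕ | φ A < ⊤} = {A : Set ℕ | A.Finite} ∧
      ∀ A : Set ℕ, φ A < ⊤ → degP (fun S : Set ↥A => φ (Subtype.val '' S)) < ⊤ := by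
  exact ⟨St14.phi, ⟨St14.phi_empty, fun A B h => St14.phi_mono h, St14.phi_subadd⟩,
    St14.phi_lsc, St14.hat_ne_phi, St14.degP_phi_top, St14.exh_phi, St14.fin_phi,
    fun A h => St14.restrict_degP h⟩
end
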